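/- arXiv:2605.30879 — 3 statements merged into one kernel-verified Lean document; each statement's English description precedes it below -/
import Mathlib

section
/- Characterization of positive assortative segregation in the mean-measurable case: The segregation map S := G⁻¹ ∘ F is the equilibrium matching (i.e. positive assortative segregation is a competitive equilibrium) if and only if the function x ↦ v_z(x, S(x)) is (weakly) increasing on X. -/
open MeasureTheory Set
open scoped NNReal
open intervalIntegral Filter Topology
open scoped ENNReal

noncomputable section

/-- The support of a measure: the points all of whose open neighborhoods have positive
measure (the smallest closed set of full measure). -/
def msupport {Z : Type*} [TopologicalSpace Z] [MeasurableSpace Z] (γ : Measure Z) : Set Z :=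
  { z | ∀ U : Set Z, IsOpen U → z ∈ U → 0 < γ U }

/-- The cdf of a Borel measure on `ℝ`. -/
def cdfOf (μ : Measure ℝ) : ℝ → ℝ := fun x => (μ (Set.Iic x)).toReal

/-- `Majorizes a b H K` (`H ⪰ K`): `∫_a^y H ≤ ∫_a^y K` for all `y ∈ [a,b]`,
with equality at `y = b`. -/
def Majorizes (a b : ℝ) (H K : ℝ → ℝ) : Prop :=
  (∀ y ∈ Set.Icc a b, (∫ t in a..y, H t) ≤ ∫ t in a..y, K t) ∧
  ((∫ t in a..b, H t) = ∫ t in a..b, K t)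

/-- A probability measure on `ℝ`, concentrated on `[a,b]`, whose cdf has a continuous
strictly positive density on `[a,b]`. -/
def HasPosDensityCDF (a b : ℝ) (μ : Measure ℝ) : Prop :=
  IsProbabilityMeasure μ ∧ μ (Set.Icc a b)ᶜ = 0 ∧
  ∃ f : ℝ → ℝ, ContinuousOn f (Set.Icc a b) ∧ (∀ t ∈ Set.Icc a b, 0 < f t) ∧
    ∀ t ∈ Set.Icc a b, cdfOf μ t = ∫ s in a..t, f s

/-- A mean-measurable competitive equilibrium for data `(v, μ, ν)` on
`X × Y = [x0,x1] × [y0,y1]`: a probability measure `J` on `X × Y` whose `X`-marginal has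
the cdf of `μ` and whose `Y`-marginal cdf majorizes that of `ν`, together with a
Lipschitz price `p` and a Lipschitz convex wage `q` with zero profits on `supp J`,
no profitable entry, and the budget condition `∫ q dH = ∫ q dG`. -/
def IsMMCE (x0 x1 y0 y1 : ℝ) (v : ℝ → ℝ → ℝ) (μ ν : Measure ℝ)
    (J : Measure (ℝ × ℝ)) (p q : ℝ → ℝ) : Prop :=
  IsProbabilityMeasure J ∧
  J ((Set.Icc x0 x1 ×ˢ Set.Icc y0 y1)ᶜ) = 0 ∧
  (∀ x : ℝ, cdfOf (J.map Prod.fst) x = cdfOf μ x) ∧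
  Majorizes y0 y1 (cdfOf (J.map Prod.snd)) (cdfOf ν) ∧
  (∃ K : ℝ≥0, LipschitzOnWith K p (Set.Icc x0 x1)) ∧
  (∃ K : ℝ≥0, LipschitzOnWith K q (Set.Icc y0 y1)) ∧
  ConvexOn ℝ (Set.Icc y0 y1) q ∧
  (∀ a ∈ msupport J, p a.1 + q a.2 = v a.1 a.2) ∧
  (∀ x ∈ Set.Icc x0 x1, ∀ z ∈ Set.Icc y0 y1, v x z ≤ p x + q z) ∧
  (∫ z, q z ∂(J.map Prod.snd)) = ∫ z, q z ∂ν

/-- The data of a twice continuously differentiable production function on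
`[x0,x1] × [y0,y1]`, together with its partial derivatives. -/
def IsC2Data (x0 x1 y0 y1 : ℝ) (v vx vz vxx vxz vzz : ℝ → ℝ → ℝ) : Prop :=
  (∀ x ∈ Set.Icc x0 x1, ∀ z ∈ Set.Icc y0 y1, HasDerivAt (fun t => v t z) (vx x z) x) ∧
  (∀ x ∈ Set.Icc x0 x1, ∀ z ∈ Set.Icc y0 y1, HasDerivAt (fun t => v x t) (vz x z) z) ∧
  (∀ x ∈ Set.Icc x0 x1, ∀ z ∈ Set.Icc y0 y1, HasDerivAt (fun t => vx t z) (vxx x z) x) ∧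
  (∀ x ∈ Set.Icc x0 x1, ∀ z ∈ Set.Icc y0 y1, HasDerivAt (fun t => vz t z) (vxz x z) x) ∧
  (∀ x ∈ Set.Icc x0 x1, ∀ z ∈ Set.Icc y0 y1, HasDerivAt (fun t => vz x t) (vzz x z) z) ∧
  ContinuousOn (fun a : ℝ × ℝ => vxx a.1 a.2) (Set.Icc x0 x1 ×ˢ Set.Icc y0 y1) ∧
  ContinuousOn (fun a : ℝ × ℝ => vxz a.1 a.2) (Set.Icc x0 x1 ×ˢ Set.Icc y0 y1) ∧
  ContinuousOn (fun a : ℝ × ℝ => vzz a.1 a.2) (Set.Icc x0 x1 ×ˢ Set.Icc y0 y1)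

/-- Strictly increasing differences (`v_xz > 0`) and strictly decreasing returns
(`v_zz < 0`) on `[x0,x1] × [y0,y1]`. -/
def SortingPooling (x0 x1 y0 y1 : ℝ) (vxz vzz : ℝ → ℝ → ℝ) : Prop :=
  (∀ x ∈ Set.Icc x0 x1, ∀ z ∈ Set.Icc y0 y1, 0 < vxz x z) ∧
  (∀ x ∈ Set.Icc x0 x1, ∀ z ∈ Set.Icc y0 y1, vzz x z < 0)
namespace PASaux

lemma cdf_sub (γ : Measure ℝ) [IsFiniteMeasure γ] {a b : ℝ} (hab : a ≤ b) :
    (γ (Ioc a b)).toReal = cdfOf γ b - cdfOf γ a := by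
  have h : Iic a ∪ Ioc a b = Iic b := Iic_union_Ioc_eq_Iic hab
  have hd : Disjoint (Iic a) (Ioc a b) := Iic_disjoint_Ioc le_rfl
  have h2 := measure_union (μ := γ) hd measurableSet_Ioc
  rw [h] at h2
  simp only [cdfOf, h2, ENNReal.toReal_add (measure_ne_top _ _) (measure_ne_top _ _)]
  ring

lemma int_on {a b : ℝ} {f : ℝ → ℝ} (hfc : ContinuousOn f (Icc a b)) {c d : ℝ}
    (hc : c ∈ Icc a b) (hd : d ∈ Icc a b) : IntervalIntegrable f volume c d :=
  (hfc.mono (uIcc_subset_Icc hc hd)).intervalIntegrable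

lemma hpd_cdf_sub {a b : ℝ} {γ : Measure ℝ} {f : ℝ → ℝ}
    (hfc : ContinuousOn f (Icc a b))
    (hcdf : ∀ t ∈ Icc a b, cdfOf γ t = ∫ s in a..t, f s)
    {c d : ℝ} (hc : c ∈ Icc a b) (hd : d ∈ Icc a b) :
    cdfOf γ d - cdfOf γ c = ∫ s in c..d, f s := by
  rw [hcdf d hd, hcdf c hc]
  have ha : a ∈ Icc a b := ⟨le_rfl, hc.1.trans hc.2⟩
  exact integral_interval_sub_left (int_on hfc ha hd) (int_on hfc ha hc)

lemma hpd_cdf_lt {a b : ℝ} {γ : Measure ℝ} {f : ℝ → ℝ}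
    (hfc : ContinuousOn f (Icc a b)) (hfpos : ∀ t ∈ Icc a b, 0 < f t)
    (hcdf : ∀ t ∈ Icc a b, cdfOf γ t = ∫ s in a..t, f s)
    {c d : ℝ} (hc : c ∈ Icc a b) (hd : d ∈ Icc a b) (hcd : c < d) :
    cdfOf γ c < cdfOf γ d := by
  have h := hpd_cdf_sub hfc hcdf hc hd
  have hpos : 0 < ∫ s in c..d, f s := by
    apply intervalIntegral_pos_of_pos_on (int_on hfc hc hd) _ hcd
    intro t ht
    exact hfpos t ⟨hc.1.trans ht.1.le, ht.2.le.trans hd.2⟩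
  linarith

lemma hpd_open_pos {a b : ℝ} (hab : a < b) {γ : Measure ℝ} (h : HasPosDensityCDF a b γ)
    {x : ℝ} (hx : x ∈ Icc a b) {V : Set ℝ} (hV : IsOpen V) (hxV : x ∈ V) : 0 < γ V := by
  obtain ⟨hP, hN, f, hfc, hfpos, hcdf⟩ := h
  haveI := hP
  obtain ⟨ε, hε, hball⟩ := Metric.isOpen_iff.mp hV x hxV
  -- construct c < d in Icc a b with Ioc c d ⊆ V
  obtain ⟨c, d, hcm, hdm, hcd, hsub⟩ :
      ∃ c d : ℝ, c ∈ Icc a b ∧ d ∈ Icc a b ∧ c < d ∧ Ioc c d ⊆ V := by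
    rcases lt_or_eq_of_le hx.1 with hax | hax
    · refine ⟨max a (x - ε/2), x, ⟨le_max_left _ _, (max_le (hx.1.trans hx.2) (by linarith [hx.2]))⟩,
        hx, ?_, ?_⟩
      · exact max_lt hax (by linarith)
      · intro t ht
        apply hball
        rw [Metric.mem_ball, Real.dist_eq, abs_of_nonpos (by linarith [ht.2])]
        have : x - ε/2 ≤ max a (x - ε/2) := le_max_right _ _
        have := ht.1
        linarith
    · refine ⟨x, min b (x + ε/2), hx, ⟨le_min (hx.1.trans hx.2) (by linarith [hx.1]), min_le_left _ _⟩, ?_, ?_⟩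
      · exact lt_min (hax ▸ hab) (by linarith)
      · intro t ht
        apply hball
        rw [Metric.mem_ball, Real.dist_eq, abs_of_nonneg (by linarith [ht.1])]
        have := ht.2.trans (min_le_right b (x + ε/2))
        linarith
  have key : 0 < γ (Ioc c d) := by
    have h1 : (γ (Ioc c d)).toReal = cdfOf γ d - cdfOf γ c := cdf_sub γ hcd.le
    have h2 := hpd_cdf_lt hfc hfpos hcdf hcm hdm hcd
    have : 0 < (γ (Ioc c d)).toReal := by linarith
    exact lt_of_le_of_lt (le_refl 0) (by
      rcases eq_or_lt_of_le (show (0:ℝ≥0∞) ≤ γ (Ioc c d) from by simp) with h0 | h0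
      · exfalso; rw [← h0] at this; simp at this
      · exact h0)
  exact lt_of_lt_of_le key (measure_mono hsub)


lemma strictMono_of_hasDerivAt_pos {f g : ℝ → ℝ} {a b : ℝ}
    (hf : ∀ t ∈ Icc a b, HasDerivAt f (g t) t) (hg : ∀ t ∈ Icc a b, 0 < g t) :
    StrictMonoOn f (Icc a b) := by
  apply strictMonoOn_of_deriv_pos (convex_Icc a b)
  · exact fun t ht => ((hf t ht).differentiableAt.continuousAt).continuousWithinAt
  · intro t ht
    rw [interior_Icc] at ht
    rw [(hf t (Ioo_subset_Icc_self ht)).deriv]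
    exact hg t (Ioo_subset_Icc_self ht)

lemma abs_diff_le_of_hasDerivAt {f g : ℝ → ℝ} {a b C : ℝ}
    (hf : ∀ t ∈ Icc a b, HasDerivAt f (g t) t) (hC : ∀ t ∈ Icc a b, |g t| ≤ C)
    {u u' : ℝ} (hu : u ∈ Icc a b) (hu' : u' ∈ Icc a b) :
    |f u - f u'| ≤ C * |u - u'| := by
  have := Convex.norm_image_sub_le_of_norm_hasDerivWithin_le
    (f := f) (f' := g) (s := Icc a b) (C := C)
    (fun t ht => (hf t ht).hasDerivWithinAt)
    (fun t ht => by rw [Real.norm_eq_abs]; exact hC t ht)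
    (convex_Icc a b) hu' hu
  simpa [Real.norm_eq_abs] using this

end PASaux

set_option maxHeartbeats 4000000 in
/-- **Characterization of PAS in the mean-measurable case** (Theorem 5, part 1):
the segregation map `S = G⁻¹ ∘ F` is the equilibrium matching iff `x ↦ v_z(x,S(x))` is
weakly increasing on `X`. -/


theorem pas_is_equilibrium_matching_iff
    (x0 x1 y0 y1 : ℝ) (hx : x0 < x1) (hy : y0 < y1)
    (μ ν : Measure ℝ)
    (hμ : HasPosDensityCDF x0 x1 μ) (hν : HasPosDensityCDF y0 y1 ν)
    (S : ℝ → ℝ)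
    (hS : ∀ x ∈ Set.Icc x0 x1, S x ∈ Set.Icc y0 y1 ∧ cdfOf ν (S x) = cdfOf μ x)
    (hScont : ContinuousOn S (Set.Icc x0 x1)) (hSmono : StrictMonoOn S (Set.Icc x0 x1))
    (v vx vz vxx vxz vzz : ℝ → ℝ → ℝ)
    (hC2 : IsC2Data x0 x1 y0 y1 v vx vz vxx vxz vzz)
    (hSP : SortingPooling x0 x1 y0 y1 vxz vzz) :
    (∃ p q : ℝ → ℝ, IsMMCE x0 x1 y0 y1 v μ ν (μ.map fun x => (x, S x)) p q) ↔
      MonotoneOn (fun x => vz x (S x)) (Set.Icc x0 x1) := by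
  -- unpack hypotheses (keep originals)
  obtain ⟨hμP, hμN, f, hfc, hfpos, hfcdf⟩ := id hμ
  obtain ⟨hνP, hνN, g, hgc, hgpos, hgcdf⟩ := id hν
  haveI := hμP; haveI := hνP
  obtain ⟨hvx, hvz, hvxx, hvxz, hvzz, hcxx, hcxz, hczz⟩ := id hC2
  obtain ⟨hxzpos, hzzneg⟩ := id hSP
  have hx0X : x0 ∈ Icc x0 x1 := ⟨le_rfl, hx.le⟩
  have hx1X : x1 ∈ Icc x0 x1 := ⟨hx.le, le_rfl⟩
  have hy0Y : y0 ∈ Icc y0 y1 := ⟨le_rfl, hy.le⟩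
  have hy1Y : y1 ∈ Icc y0 y1 := ⟨hy.le, le_rfl⟩
  have hSmemY : ∀ u ∈ Icc x0 x1, S u ∈ Icc y0 y1 := fun u hu => (hS u hu).1
  -- the clamped version of S and the graph map
  set Sc : ℝ → ℝ := fun t => S (max x0 (min t x1)) with hScdef
  have hclampmem : ∀ t : ℝ, max x0 (min t x1) ∈ Icc x0 x1 :=
    fun t => ⟨le_max_left _ _, max_le hx.le (min_le_right _ _)⟩
  have hclampid : ∀ t ∈ Icc x0 x1, max x0 (min t x1) = t := by
    intro t ht
    rw [min_eq_left ht.2, max_eq_right ht.1]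
  have hSceq : ∀ t ∈ Icc x0 x1, Sc t = S t := fun t ht => by rw [hScdef]; simp only []; rw [hclampid t ht]
  have hSc_cont : Continuous Sc := by
    apply hScont.comp_continuous
    · exact (continuous_const.max ((continuous_id.min continuous_const)))
    · exact hclampmem
  set F0 : ℝ → ℝ × ℝ := fun t => (t, Sc t) with hF0def
  have hF0m : Measurable F0 := measurable_id.prodMk hSc_cont.measurable
  have hF0eq : ∀ t ∈ Icc x0 x1, F0 t = (t, S t) := fun t ht => by
    rw [hF0def]; simp only []; rw [hSceq t ht]
  have haeIcc : ∀ᵐ t ∂μ, t ∈ Icc x0 x1 := by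
    rw [MeasureTheory.ae_iff]
    exact measure_mono_null (fun t ht => ht) hμN
  have hae : (fun u => (u, S u)) =ᵐ[μ] F0 := by
    filter_upwards [haeIcc] with t ht
    exact (hF0eq t ht).symm
  have hJ : (μ.map fun u => (u, S u)) = μ.map F0 := Measure.map_congr hae
  have haem : AEMeasurable (fun u => (u, S u)) μ := ⟨F0, hF0m, hae⟩
  -- cdf facts
  have hcdfμ0 : cdfOf μ x0 = 0 := by rw [hfcdf x0 hx0X, intervalIntegral.integral_same]
  have hcdfν0 : cdfOf ν y0 = 0 := by rw [hgcdf y0 hy0Y, intervalIntegral.integral_same]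
  have hcdfμ1 : cdfOf μ x1 = 1 := by
    have h1 : μ (Iic x1) = 1 := by
      apply le_antisymm prob_le_one
      have : (univ : Set ℝ) ⊆ Iic x1 ∪ (Icc x0 x1)ᶜ := by
        intro t _
        rcases le_or_gt t x1 with h | h
        · exact Or.inl h
        · exact Or.inr (fun hm => absurd hm.2 (not_le.mpr h))
      calc (1 : ℝ≥0∞) = μ univ := (measure_univ).symm
        _ ≤ μ (Iic x1 ∪ (Icc x0 x1)ᶜ) := measure_mono this
        _ ≤ μ (Iic x1) + μ ((Icc x0 x1)ᶜ) := measure_union_le _ _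
        _ = μ (Iic x1) := by rw [hμN, add_zero]
    rw [cdfOf, h1, ENNReal.toReal_one]
  have hcdfν1 : cdfOf ν y1 = 1 := by
    have h1 : ν (Iic y1) = 1 := by
      apply le_antisymm prob_le_one
      have : (univ : Set ℝ) ⊆ Iic y1 ∪ (Icc y0 y1)ᶜ := by
        intro t _
        rcases le_or_gt t y1 with h | h
        · exact Or.inl h
        · exact Or.inr (fun hm => absurd hm.2 (not_le.mpr h))
      calc (1 : ℝ≥0∞) = ν univ := (measure_univ).symm
        _ ≤ ν (Iic y1 ∪ (Icc y0 y1)ᶜ) := measure_mono this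
        _ ≤ ν (Iic y1) + ν ((Icc y0 y1)ᶜ) := measure_union_le _ _
        _ = ν (Iic y1) := by rw [hνN, add_zero]
    rw [cdfOf, h1, ENNReal.toReal_one]
  -- endpoints of S
  have hSx0 : S x0 = y0 := by
    by_contra hne
    have h1 : y0 < S x0 := lt_of_le_of_ne (hSmemY x0 hx0X).1 (Ne.symm hne)
    have := PASaux.hpd_cdf_lt hgc hgpos hgcdf hy0Y (hSmemY x0 hx0X) h1
    rw [hcdfν0, (hS x0 hx0X).2, hcdfμ0] at this
    exact lt_irrefl 0 this
  have hSx1 : S x1 = y1 := by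
    by_contra hne
    have h1 : S x1 < y1 := lt_of_le_of_ne (hSmemY x1 hx1X).2 hne
    have := PASaux.hpd_cdf_lt hgc hgpos hgcdf (hSmemY x1 hx1X) hy1Y h1
    rw [(hS x1 hx1X).2, hcdfμ1, hcdfν1] at this
    exact lt_irrefl 1 this
  -- support of the matching measure
  have hsupp : ∀ u ∈ Icc x0 x1, (u, S u) ∈ msupport (μ.map fun x => (x, S x)) := by
    intro u hu U hU hmemU
    rw [hJ, Measure.map_apply hF0m hU.measurableSet]
    have hopen : IsOpen (F0 ⁻¹' U) := hU.preimage (continuous_id.prodMk hSc_cont)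
    have hmem : u ∈ F0 ⁻¹' U := by rw [mem_preimage, hF0eq u hu]; exact hmemU
    exact PASaux.hpd_open_pos hx hμ hu hopen hmem
  -- continuity/monotonicity facts for vz
  have hvzcont : ∀ u ∈ Icc x0 x1, ContinuousOn (fun t => vz u t) (Icc y0 y1) :=
    fun u hu t ht => ((hvzz u hu t ht).differentiableAt.continuousAt).continuousWithinAt
  have hvzmono : ∀ z ∈ Icc y0 y1, StrictMonoOn (fun t => vz t z) (Icc x0 x1) := by
    intro z hz
    exact PASaux.strictMono_of_hasDerivAt_pos
      (fun t ht => hvxz t ht z hz) (fun t ht => hxzpos t ht z hz)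
  constructor
  · -- forward direction
    rintro ⟨p, q, hJP, hJN, hfst, hmaj, hpl, hql, hqconv, hzero, hentry, hbudget⟩
    have hkey : ∀ u ∈ Icc x0 x1, ∀ z ∈ Icc y0 y1, v u z - v u (S u) ≤ q z - q (S u) := by
      intro u hu z hz
      have h0 := hzero (u, S u) (hsupp u hu)
      have h1 := hentry u hu z hz
      simp only at h0 h1
      linarith
    intro u hu u' hu' huu'
    rcases eq_or_lt_of_le huu' with heq | hlt
    · rw [heq]
    simp only
    set a := S u with hadef
    set b := S u' with hbdef
    have hab : a < b := hSmono hu hu' hlt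
    have ha : a ∈ Icc y0 y1 := hSmemY u hu
    have hb : b ∈ Icc y0 y1 := hSmemY u' hu'
    have claim1 : vz u a ≤ (q b - q a) / (b - a) := by
      have hd : HasDerivAt (fun t => v u t) (vz u a) a := hvz u hu a ha
      have htend : Tendsto (slope (v u) a) (𝓝[>] a) (𝓝 (vz u a)) :=
        (hasDerivAt_iff_tendsto_slope.mp hd).mono_left
          (nhdsWithin_mono a (fun t (htt : t ∈ Ioi a) => ne_of_gt htt))
      refine le_of_tendsto htend ?_
      filter_upwards [Ioc_mem_nhdsGT_of_mem (⟨le_rfl, hab⟩ : a ∈ Ico a b)] with z hz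
      have hzY : z ∈ Icc y0 y1 := ⟨ha.1.trans hz.1.le, hz.2.trans hb.2⟩
      rw [slope_def_field]
      have hkz := hkey u hu z hzY
      rw [← hadef] at hkz
      have h1 : (v u z - v u a) / (z - a) ≤ (q z - q a) / (z - a) :=
        (div_le_div_iff_of_pos_right (sub_pos.2 hz.1)).2 (by linarith)
      have h2 : (q z - q a) / (z - a) ≤ (q b - q a) / (b - a) :=
        hqconv.secant_mono ha hzY hb (ne_of_gt hz.1) (ne_of_gt hab) hz.2
      exact h1.trans h2
    have claim2 : (q b - q a) / (b - a) ≤ vz u' b := by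
      have hd : HasDerivAt (fun t => v u' t) (vz u' b) b := hvz u' hu' b hb
      have htend : Tendsto (slope (v u') b) (𝓝[<] b) (𝓝 (vz u' b)) :=
        (hasDerivAt_iff_tendsto_slope.mp hd).mono_left
          (nhdsWithin_mono b (fun t (htt : t ∈ Iio b) => ne_of_lt htt))
      refine ge_of_tendsto htend ?_
      filter_upwards [Ico_mem_nhdsLT_of_mem (⟨hab, le_rfl⟩ : b ∈ Ioc a b)] with z hz
      have hzY : z ∈ Icc y0 y1 := ⟨ha.1.trans hz.1, hz.2.le.trans hb.2⟩
      rw [slope_def_field]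
      have hkz := hkey u' hu' z hzY
      rw [← hbdef] at hkz
      have h2 : (q b - q z) / (b - z) ≤ (v u' b - v u' z) / (b - z) :=
        (div_le_div_iff_of_pos_right (sub_pos.2 hz.2)).2 (by linarith)
      have h3 : (v u' z - v u' b) / (z - b) = (v u' b - v u' z) / (b - z) := by
        rw [← neg_sub (v u' b) (v u' z), ← neg_sub b z, neg_div_neg_eq]
      have hsec := hqconv.secant_mono hb ha hzY (ne_of_lt hab) (ne_of_lt hz.2) hz.1
      have e1 : (q a - q b) / (a - b) = (q b - q a) / (b - a) := by
        rw [← neg_sub (q b) (q a), ← neg_sub b a, neg_div_neg_eq]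
      have e2 : (q z - q b) / (z - b) = (q b - q z) / (b - z) := by
        rw [← neg_sub (q b) (q z), ← neg_sub b z, neg_div_neg_eq]
      rw [e1, e2] at hsec
      rw [h3]
      exact hsec.trans h2
    exact claim1.trans claim2
  · -- backward direction
    intro hmono
    -- bound on vxz
    obtain ⟨C, hCb'⟩ := (isCompact_Icc.prod isCompact_Icc).exists_bound_of_continuousOn hcxz
    have hCb : ∀ u ∈ Icc x0 x1, ∀ z ∈ Icc y0 y1, |vxz u z| ≤ C := by
      intro u hu z hz
      have := hCb' (u, z) ⟨hu, hz⟩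
      simpa [Real.norm_eq_abs] using this
    have hC0 : 0 ≤ C := le_trans (abs_nonneg _) (hCb x0 hx0X y0 hy0Y)
    have hvzdiff : ∀ z ∈ Icc y0 y1, ∀ u ∈ Icc x0 x1, ∀ u' ∈ Icc x0 x1,
        |vz u z - vz u' z| ≤ C * |u - u'| := fun z hz u hu u' hu' =>
      PASaux.abs_diff_le_of_hasDerivAt (fun t ht => hvxz t ht z hz)
        (fun t ht => hCb t ht z hz) hu hu'
    -- bound on vz
    obtain ⟨M0, hM0⟩ := isCompact_Icc.exists_bound_of_continuousOn (hvzcont x0 hx0X)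
    set M : ℝ := M0 + C * (x1 - x0) with hMdef
    have hM : ∀ u ∈ Icc x0 x1, ∀ z ∈ Icc y0 y1, |vz u z| ≤ M := by
      intro u hu z hz
      have h1 : |vz x0 z| ≤ M0 := by simpa [Real.norm_eq_abs] using hM0 z hz
      have h2 : |vz u z - vz x0 z| ≤ C * |u - x0| := hvzdiff z hz u hu x0 hx0X
      have h3 : |u - x0| ≤ x1 - x0 := by rw [abs_of_nonneg (by linarith [hu.1])]; linarith [hu.2]
      have h4 : C * |u - x0| ≤ C * (x1 - x0) := mul_le_mul_of_nonneg_left h3 hC0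
      calc |vz u z| ≤ |vz x0 z| + |vz u z - vz x0 z| := by
            have := abs_add_le (vz x0 z) (vz u z - vz x0 z); simpa using this
        _ ≤ M0 + C * (x1 - x0) := by linarith
    have hM0' : 0 ≤ M := le_trans (abs_nonneg _) (hM x0 hx0X y0 hy0Y)
    have hvlipz : ∀ u ∈ Icc x0 x1, ∀ z ∈ Icc y0 y1, ∀ z' ∈ Icc y0 y1,
        |v u z - v u z'| ≤ M * |z - z'| := fun u hu z hz z' hz' =>
      PASaux.abs_diff_le_of_hasDerivAt (fun t ht => hvz u hu t ht)
        (fun t ht => hM u hu t ht) hz hz'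
    -- bound on vx(·, y0)
    have hvxy0cont : ContinuousOn (fun t => vx t y0) (Icc x0 x1) :=
      fun t ht => ((hvxx t ht y0 hy0Y).differentiableAt.continuousAt).continuousWithinAt
    obtain ⟨C0, hC0b⟩ := isCompact_Icc.exists_bound_of_continuousOn hvxy0cont
    have hC00 : 0 ≤ C0 := le_trans (norm_nonneg _) (hC0b x0 hx0X)
    -- FTC in z
    have hftcz : ∀ u ∈ Icc x0 x1, ∀ c ∈ Icc y0 y1, ∀ d ∈ Icc y0 y1,
        (∫ t in c..d, vz u t) = v u d - v u c := by
      intro u hu c hc d hd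
      exact integral_eq_sub_of_hasDerivAt
        (fun t ht => hvz u hu t (uIcc_subset_Icc hc hd ht))
        (((hvzcont u hu).mono (uIcc_subset_Icc hc hd)).intervalIntegrable)
    -- x-Lipschitz of v
    set L : ℝ := C * (y1 - y0) + C0 with hLdef
    have hL0 : 0 ≤ L := by
      have : 0 ≤ C * (y1 - y0) := mul_nonneg hC0 (by linarith)
      linarith
    have hvlipx : ∀ z ∈ Icc y0 y1, ∀ u ∈ Icc x0 x1, ∀ u' ∈ Icc x0 x1,
        |v u z - v u' z| ≤ L * |u - u'| := by
      intro z hz u hu u' hu'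
      have h00 : |v u y0 - v u' y0| ≤ C0 * |u - u'| :=
        PASaux.abs_diff_le_of_hasDerivAt (fun t ht => hvx t ht y0 hy0Y)
          (fun t ht => by simpa [Real.norm_eq_abs] using hC0b t ht) hu hu'
      have hiu := hftcz u hu y0 hy0Y z hz
      have hiu' := hftcz u' hu' y0 hy0Y z hz
      have hint1 : IntervalIntegrable (fun t => vz u t) volume y0 z :=
        ((hvzcont u hu).mono (uIcc_subset_Icc hy0Y hz)).intervalIntegrable
      have hint2 : IntervalIntegrable (fun t => vz u' t) volume y0 z :=
        ((hvzcont u' hu').mono (uIcc_subset_Icc hy0Y hz)).intervalIntegrable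
      have hsubint : (∫ t in y0..z, vz u t) - (∫ t in y0..z, vz u' t)
          = ∫ t in y0..z, (vz u t - vz u' t) := (integral_sub hint1 hint2).symm
      have hbd : |∫ t in y0..z, (vz u t - vz u' t)| ≤ (C * |u - u'|) * |z - y0| := by
        have := intervalIntegral.norm_integral_le_of_norm_le_const
          (C := C * |u - u'|) (f := fun t => vz u t - vz u' t) (a := y0) (b := z) ?_
        · simpa [Real.norm_eq_abs] using this
        · intro t ht
          have htY : t ∈ Icc y0 y1 := uIcc_subset_Icc hy0Y hz (uIoc_subset_uIcc ht)
          simpa [Real.norm_eq_abs] using hvzdiff t htY u hu u' hu'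
      have hzb : |z - y0| ≤ y1 - y0 := by
        rw [abs_of_nonneg (by linarith [hz.1])]; linarith [hz.2]
      have key : |v u z - v u' z| ≤ C * |u - u'| * |z - y0| + C0 * |u - u'| := by
        have hrw : v u z - v u' z
            = ((∫ t in y0..z, vz u t) - (∫ t in y0..z, vz u' t)) + (v u y0 - v u' y0) := by
          rw [hiu, hiu']; ring
        rw [hrw, hsubint]
        calc |(∫ t in y0..z, (vz u t - vz u' t)) + (v u y0 - v u' y0)|
            ≤ |∫ t in y0..z, (vz u t - vz u' t)| + |v u y0 - v u' y0| := abs_add_le _ _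
          _ ≤ C * |u - u'| * |z - y0| + C0 * |u - u'| := by linarith
      have : C * |u - u'| * |z - y0| ≤ C * (y1 - y0) * |u - u'| := by
        have h5 : 0 ≤ C * |u - u'| := mul_nonneg hC0 (abs_nonneg _)
        nlinarith [abs_nonneg (u - u')]
      rw [hLdef]
      nlinarith [abs_nonneg (u - u')]
    -- Lipschitz constant for S
    obtain ⟨Fm, hFm⟩ := isCompact_Icc.exists_bound_of_continuousOn hfc
    obtain ⟨zg, hzgY, hzgmin⟩ := isCompact_Icc.exists_isMinOn (nonempty_Icc.mpr hy.le) hgc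
    have hGm0 : 0 < g zg := hgpos zg hzgY
    have hSlip' : ∀ u ∈ Icc x0 x1, ∀ u' ∈ Icc x0 x1, u ≤ u' →
        S u' - S u ≤ (Fm / g zg) * (u' - u) := by
      intro u hu u' hu' huu'
      have hss : S u ≤ S u' := hSmono.monotoneOn hu hu' huu'
      have hSuY := hSmemY u hu
      have hSu'Y := hSmemY u' hu'
      have h1 : g zg * (S u' - S u) ≤ ∫ t in (S u)..(S u'), g t := by
        have hcst : (∫ t in (S u)..(S u'), g zg) = (S u' - S u) * g zg := by
          rw [intervalIntegral.integral_const, smul_eq_mul]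
        have := intervalIntegral.integral_mono_on hss
          (_root_.intervalIntegrable_const (c := g zg)) (PASaux.int_on hgc hSuY hSu'Y)
          (fun t ht => hzgmin (⟨hSuY.1.trans ht.1, ht.2.trans hSu'Y.2⟩ : t ∈ Icc y0 y1))
        rw [hcst] at this
        linarith
      have h2 : (∫ t in (S u)..(S u'), g t) = cdfOf μ u' - cdfOf μ u := by
        rw [← PASaux.hpd_cdf_sub hgc hgcdf hSuY hSu'Y, (hS u hu).2, (hS u' hu').2]
      have h3 : cdfOf μ u' - cdfOf μ u = ∫ t in u..u', f t :=
        PASaux.hpd_cdf_sub hfc hfcdf hu hu'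
      have h4 : (∫ t in u..u', f t) ≤ Fm * (u' - u) := by
        have hcst : (∫ t in u..u', Fm) = (u' - u) * Fm := by
          rw [intervalIntegral.integral_const, smul_eq_mul]
        have := intervalIntegral.integral_mono_on huu'
          (PASaux.int_on hfc hu hu') (_root_.intervalIntegrable_const (c := Fm))
          (fun t ht => le_trans (le_abs_self _)
            (by simpa [Real.norm_eq_abs] using hFm t (⟨hu.1.trans ht.1, ht.2.trans hu'.2⟩ : t ∈ Icc x0 x1)))
        rw [hcst] at this
        linarith
      rw [div_mul_eq_mul_div, le_div_iff₀ hGm0]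
      nlinarith
    have hFm0 : 0 ≤ Fm := le_trans (norm_nonneg _) (hFm x0 hx0X)
    set Ls : ℝ := Fm / g zg with hLsdef
    have hLs0 : 0 ≤ Ls := div_nonneg hFm0 hGm0.le
    have hSlip : ∀ u ∈ Icc x0 x1, ∀ u' ∈ Icc x0 x1, |S u - S u'| ≤ Ls * |u - u'| := by
      intro u hu u' hu'
      rcases le_total u u' with h | h
      · have := hSlip' u hu u' hu' h
        have hss : S u ≤ S u' := hSmono.monotoneOn hu hu' h
        rw [abs_of_nonpos (by linarith), abs_of_nonpos (by linarith)]
        linarith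
      · have := hSlip' u' hu' u hu h
        have hss : S u' ≤ S u := hSmono.monotoneOn hu' hu h
        rw [abs_of_nonneg (by linarith), abs_of_nonneg (by linarith)]
        linarith
    -- the inverse map T
    have hSsurj : ∀ z : ℝ, z ∈ Icc y0 y1 → ∃ u, u ∈ Icc x0 x1 ∧ S u = z := by
      intro z hz
      have h := intermediate_value_Icc hx.le hScont
      rw [hSx0, hSx1] at h
      obtain ⟨u, hu, hSu⟩ := h hz
      exact ⟨u, hu, hSu⟩
    set T : ℝ → ℝ := fun z => if h : z ∈ Icc y0 y1 then Classical.choose (hSsurj z h) else x0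
      with hTdef
    have hTmem : ∀ z ∈ Icc y0 y1, T z ∈ Icc x0 x1 := by
      intro z hz
      rw [hTdef]; simp only [dif_pos hz]
      exact (Classical.choose_spec (hSsurj z hz)).1
    have hSTz : ∀ z ∈ Icc y0 y1, S (T z) = z := by
      intro z hz
      rw [hTdef]; simp only [dif_pos hz]
      exact (Classical.choose_spec (hSsurj z hz)).2
    have hTS : ∀ u ∈ Icc x0 x1, T (S u) = u := fun u hu =>
      hSmono.injOn (hTmem _ (hSmemY u hu)) hu (hSTz _ (hSmemY u hu))
    have hTmono : ∀ z ∈ Icc y0 y1, ∀ z' ∈ Icc y0 y1, z ≤ z' → T z ≤ T z' := by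
      intro z hz z' hz' hzz'
      by_contra hcon
      push_neg at hcon
      have := hSmono (hTmem z' hz') (hTmem z hz) hcon
      rw [hSTz z hz, hSTz z' hz'] at this
      linarith
    -- the wage schedule
    set w : ℝ → ℝ := fun t => vz (T t) t with hwdef
    have hwmono : MonotoneOn w (Icc y0 y1) := by
      intro t ht t' ht' htt'
      have h := hmono (hTmem t ht) (hTmem t' ht') (hTmono t ht t' ht' htt')
      simp only at h
      rw [hSTz t ht, hSTz t' ht'] at h
      exact h
    have hwint : ∀ c ∈ Icc y0 y1, ∀ d ∈ Icc y0 y1, IntervalIntegrable w volume c d :=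
      fun c hc d hd => (hwmono.mono (uIcc_subset_Icc hc hd)).intervalIntegrable
    have hwbd : ∀ t ∈ Icc y0 y1, |w t| ≤ M := fun t ht => hM (T t) (hTmem t ht) t ht
    set q : ℝ → ℝ := fun z => ∫ t in y0..z, w t with hqdef
    have hqsub : ∀ c ∈ Icc y0 y1, ∀ d ∈ Icc y0 y1, q d - q c = ∫ t in c..d, w t := by
      intro c hc d hd
      rw [hqdef]
      exact integral_interval_sub_left (hwint y0 hy0Y d hd) (hwint y0 hy0Y c hc)
    have hqlip : ∀ z ∈ Icc y0 y1, ∀ z' ∈ Icc y0 y1, |q z - q z'| ≤ M * |z - z'| := by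
      intro z hz z' hz'
      rw [show q z - q z' = ∫ t in z'..z, w t from hqsub z' hz' z hz]
      have := intervalIntegral.norm_integral_le_of_norm_le_const
        (C := M) (f := w) (a := z') (b := z) ?_
      · simpa [Real.norm_eq_abs] using this
      · intro t ht
        have htY : t ∈ Icc y0 y1 := uIcc_subset_Icc hz' hz (uIoc_subset_uIcc ht)
        simpa [Real.norm_eq_abs] using hwbd t htY
    set p : ℝ → ℝ := fun u => v u (S u) - q (S u) with hpdef
    -- the second marginal is ν
    have hsnd : (μ.map fun u => (u, S u)).map Prod.snd = ν := by
      rw [hJ, Measure.map_map measurable_snd hF0m]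
      have hcomp : Prod.snd ∘ F0 = Sc := rfl
      rw [hcomp]
      haveI : IsProbabilityMeasure (μ.map Sc) :=
        Measure.isProbabilityMeasure_map hSc_cont.measurable.aemeasurable
      apply Measure.ext_of_Iic
      intro r
      rw [Measure.map_apply hSc_cont.measurable measurableSet_Iic]
      rcases lt_or_ge r y0 with hr | hr
      · have h1 : Sc ⁻¹' Iic r ⊆ (Icc x0 x1)ᶜ := by
          intro t ht hmem
          have h2 : y0 ≤ Sc t := by rw [hSceq t hmem]; exact (hSmemY t hmem).1
          have h3 : Sc t ≤ r := ht
          linarith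
        have h2 : Iic r ⊆ (Icc y0 y1)ᶜ := fun t (ht : t ≤ r) hmem => by
          have := hmem.1; linarith
        rw [measure_mono_null h1 hμN, measure_mono_null h2 hνN]
      rcases le_or_gt y1 r with hr1 | hr1
      · have hA : μ (Sc ⁻¹' Iic r) = 1 := by
          apply le_antisymm prob_le_one
          have hsub : (univ : Set ℝ) ⊆ Sc ⁻¹' Iic r ∪ (Icc x0 x1)ᶜ := by
            intro t _
            by_cases htX : t ∈ Icc x0 x1
            · left
              show Sc t ≤ r
              rw [hSceq t htX]
              exact (hSmemY t htX).2.trans hr1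
            · exact Or.inr htX
          calc (1 : ℝ≥0∞) = μ univ := measure_univ.symm
            _ ≤ μ (Sc ⁻¹' Iic r ∪ (Icc x0 x1)ᶜ) := measure_mono hsub
            _ ≤ μ (Sc ⁻¹' Iic r) + μ ((Icc x0 x1)ᶜ) := measure_union_le _ _
            _ = μ (Sc ⁻¹' Iic r) := by rw [hμN, add_zero]
        have hB : ν (Iic r) = 1 := by
          apply le_antisymm prob_le_one
          have hsub : (univ : Set ℝ) ⊆ Iic r ∪ (Icc y0 y1)ᶜ := by
            intro t _
            by_cases htY : t ∈ Icc y0 y1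
            · exact Or.inl (htY.2.trans hr1)
            · exact Or.inr htY
          calc (1 : ℝ≥0∞) = ν univ := measure_univ.symm
            _ ≤ ν (Iic r ∪ (Icc y0 y1)ᶜ) := measure_mono hsub
            _ ≤ ν (Iic r) + ν ((Icc y0 y1)ᶜ) := measure_union_le _ _
            _ = ν (Iic r) := by rw [hνN, add_zero]
        rw [hA, hB]
      · obtain ⟨c, hc, hSceq'⟩ := hSsurj r ⟨hr, hr1.le⟩
        have e1 : μ (Sc ⁻¹' Iic r) = μ (Iic c) := by
          apply le_antisymm
          · have hsub : Sc ⁻¹' Iic r ⊆ Iic c ∪ (Icc x0 x1)ᶜ := by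
              intro t ht
              by_cases htX : t ∈ Icc x0 x1
              · left
                show t ≤ c
                by_contra hcon
                push_neg at hcon
                have := hSmono hc htX hcon
                rw [hSceq'] at this
                have h5 : Sc t ≤ r := ht
                rw [hSceq t htX] at h5
                linarith
              · exact Or.inr htX
            calc μ (Sc ⁻¹' Iic r) ≤ μ (Iic c ∪ (Icc x0 x1)ᶜ) := measure_mono hsub
              _ ≤ μ (Iic c) + μ ((Icc x0 x1)ᶜ) := measure_union_le _ _
              _ = μ (Iic c) := by rw [hμN, add_zero]
          · have hsub : Iic c ⊆ Sc ⁻¹' Iic r ∪ (Icc x0 x1)ᶜ := by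
              intro t (ht : t ≤ c)
              by_cases htX : t ∈ Icc x0 x1
              · left
                show Sc t ≤ r
                rw [hSceq t htX, ← hSceq']
                exact hSmono.monotoneOn htX hc ht
              · exact Or.inr htX
            calc μ (Iic c) ≤ μ (Sc ⁻¹' Iic r ∪ (Icc x0 x1)ᶜ) := measure_mono hsub
              _ ≤ μ (Sc ⁻¹' Iic r) + μ ((Icc x0 x1)ᶜ) := measure_union_le _ _
              _ = μ (Sc ⁻¹' Iic r) := by rw [hμN, add_zero]
        rw [e1]
        rw [← ENNReal.toReal_eq_toReal_iff' (measure_ne_top _ _) (measure_ne_top _ _)]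
        show cdfOf μ c = cdfOf ν r
        rw [← hSceq']
        exact ((hS c hc).2).symm
    refine ⟨p, q, ?_, ?_, ?_, ?_, ?_, ?_, ?_, ?_, ?_, ?_⟩
    · exact Measure.isProbabilityMeasure_map haem
    · rw [hJ, Measure.map_apply hF0m ((measurableSet_Icc.prod measurableSet_Icc).compl)]
      apply measure_mono_null _ hμN
      intro t ht htX
      exact ht (by rw [hF0eq t htX]; exact ⟨htX, hSmemY t htX⟩)
    · have hfst : ((μ.map fun u => (u, S u)).map Prod.fst) = μ := by
        rw [hJ, Measure.map_map measurable_fst hF0m]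
        have hid : Prod.fst ∘ F0 = id := rfl
        rw [hid, Measure.map_id]
      intro x
      rw [hfst]
    · rw [hsnd]
      exact ⟨fun z hz => le_rfl, rfl⟩
    · refine ⟨Real.toNNReal (L + 2 * M * Ls), LipschitzOnWith.of_dist_le_mul ?_⟩
      intro u hu u' hu'
      rw [Real.dist_eq, Real.dist_eq, Real.coe_toNNReal _ (by nlinarith)]
      have hSuY := hSmemY u hu
      have hSu'Y := hSmemY u' hu'
      have h1 : |v u (S u) - v u' (S u)| ≤ L * |u - u'| := hvlipx (S u) hSuY u hu u' hu'
      have h2 : |v u' (S u) - v u' (S u')| ≤ M * |S u - S u'| :=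
        hvlipz u' hu' (S u) hSuY (S u') hSu'Y
      have h3 : |q (S u) - q (S u')| ≤ M * |S u - S u'| := hqlip (S u) hSuY (S u') hSu'Y
      have h4 : |S u - S u'| ≤ Ls * |u - u'| := hSlip u hu u' hu'
      have h5 : M * |S u - S u'| ≤ M * (Ls * |u - u'|) := mul_le_mul_of_nonneg_left h4 hM0'
      have hdecomp : p u - p u' = (v u (S u) - v u' (S u)) + (v u' (S u) - v u' (S u'))
          - (q (S u) - q (S u')) := by
        simp only [hpdef]; ring
      calc |p u - p u'|
          ≤ |(v u (S u) - v u' (S u)) + (v u' (S u) - v u' (S u'))| + |q (S u) - q (S u')| := by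
            rw [hdecomp]; exact abs_sub _ _
        _ ≤ |v u (S u) - v u' (S u)| + |v u' (S u) - v u' (S u')| + |q (S u) - q (S u')| := by
            linarith [abs_add_le (v u (S u) - v u' (S u)) (v u' (S u) - v u' (S u'))]
        _ ≤ (L + 2 * M * Ls) * |u - u'| := by nlinarith
    · refine ⟨Real.toNNReal M, LipschitzOnWith.of_dist_le_mul ?_⟩
      intro z hz z' hz'
      rw [Real.dist_eq, Real.dist_eq, Real.coe_toNNReal _ hM0']
      exact hqlip z hz z' hz'
    · apply convexOn_of_slope_mono_adjacent (convex_Icc y0 y1)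
      intro zu zm zt hzu hzt hum hmt
      have hzmY : zm ∈ Icc y0 y1 := ⟨hzu.1.trans hum.le, hmt.le.trans hzt.2⟩
      have hA : q zm - q zu ≤ (zm - zu) * w zm := by
        rw [hqsub zu hzu zm hzmY]
        have hcst : (∫ t in zu..zm, w zm) = (zm - zu) * w zm := by
          rw [intervalIntegral.integral_const, smul_eq_mul]
        have := intervalIntegral.integral_mono_on hum.le (hwint zu hzu zm hzmY)
          (_root_.intervalIntegrable_const (c := w zm))
          (fun t ht => hwmono (⟨hzu.1.trans ht.1, ht.2.trans hzmY.2⟩ : t ∈ Icc y0 y1) hzmY ht.2)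
        rw [hcst] at this; exact this
      have hB : (zt - zm) * w zm ≤ q zt - q zm := by
        rw [hqsub zm hzmY zt hzt]
        have hcst : (∫ t in zm..zt, w zm) = (zt - zm) * w zm := by
          rw [intervalIntegral.integral_const, smul_eq_mul]
        have := intervalIntegral.integral_mono_on hmt.le
          (_root_.intervalIntegrable_const (c := w zm)) (hwint zm hzmY zt hzt)
          (fun t ht => hwmono hzmY (⟨hzmY.1.trans ht.1, ht.2.trans hzt.2⟩ : t ∈ Icc y0 y1) ht.1)
        rw [hcst] at this; exact this
      rw [div_le_div_iff₀ (by linarith) (by linarith)]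
      have h1 : (q zm - q zu) * (zt - zm) ≤ ((zm - zu) * w zm) * (zt - zm) :=
        mul_le_mul_of_nonneg_right hA (by linarith)
      have h2 : ((zm - zu) * w zm) * (zt - zm) = ((zt - zm) * w zm) * (zm - zu) := by ring
      have h3 : ((zt - zm) * w zm) * (zm - zu) ≤ (q zt - q zm) * (zm - zu) :=
        mul_le_mul_of_nonneg_right hB (by linarith)
      linarith
    · intro a hamem
      have hΓ : IsClosed ((fun u => (u, S u)) '' Icc x0 x1) :=
        (isCompact_Icc.image_of_continuousOn (continuousOn_id.prodMk hScont)).isClosed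
      have hmemΓ : a ∈ (fun u => (u, S u)) '' Icc x0 x1 := by
        by_contra hnot
        have hpos := hamem _ hΓ.isOpen_compl hnot
        have hzero : (μ.map fun u => (u, S u)) (((fun u => (u, S u)) '' Icc x0 x1)ᶜ) = 0 := by
          rw [hJ, Measure.map_apply hF0m hΓ.measurableSet.compl]
          apply measure_mono_null _ hμN
          intro t ht htX
          exact ht ⟨t, htX, (hF0eq t htX).symm⟩
        rw [hzero] at hpos
        exact lt_irrefl 0 hpos
      obtain ⟨u, hu, hua⟩ := hmemΓ
      rw [← hua]
      show p u + q (S u) = v u (S u)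
      simp only [hpdef]
      ring
    · intro u hu z hz
      have hSuY := hSmemY u hu
      have hftc := hftcz u hu (S u) hSuY z hz
      have hq := hqsub (S u) hSuY z hz
      have hp : p u = v u (S u) - q (S u) := by simp only [hpdef]
      have hkey2 : (∫ t in (S u)..z, vz u t) ≤ ∫ t in (S u)..z, w t := by
        rcases le_total (S u) z with hcase | hcase
        · apply intervalIntegral.integral_mono_on hcase
            (((hvzcont u hu).mono (uIcc_subset_Icc hSuY hz)).intervalIntegrable)
            (hwint (S u) hSuY z hz)
          intro t ht
          have htY : t ∈ Icc y0 y1 := ⟨hSuY.1.trans ht.1, ht.2.trans hz.2⟩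
          have hTt : u ≤ T t := by
            have := hTmono (S u) hSuY t htY ht.1
            rw [hTS u hu] at this; exact this
          rcases eq_or_lt_of_le hTt with he | hlt
          · simp only [hwdef]
            rw [← he]
          · simp only [hwdef]
            exact le_of_lt (hvzmono t htY hu (hTmem t htY) hlt)
        · have hmono2 : (∫ t in z..(S u), w t) ≤ ∫ t in z..(S u), vz u t := by
            apply intervalIntegral.integral_mono_on hcase (hwint z hz (S u) hSuY)
              (((hvzcont u hu).mono (uIcc_subset_Icc hz hSuY)).intervalIntegrable)
            intro t ht
            have htY : t ∈ Icc y0 y1 := ⟨hz.1.trans ht.1, ht.2.trans hSuY.2⟩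
            have hTt : T t ≤ u := by
              have := hTmono t htY (S u) hSuY ht.2
              rw [hTS u hu] at this; exact this
            rcases eq_or_lt_of_le hTt with he | hlt
            · simp only [hwdef]
              rw [he]
            · simp only [hwdef]
              exact le_of_lt (hvzmono t htY (hTmem t htY) hu hlt)
          have e1 : (∫ t in (S u)..z, vz u t) = - ∫ t in z..(S u), vz u t :=
            intervalIntegral.integral_symm z (S u)
          have e2 : (∫ t in (S u)..z, w t) = - ∫ t in z..(S u), w t :=
            intervalIntegral.integral_symm z (S u)
          rw [e1, e2]
          linarith
      show v u z ≤ p u + q z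
      rw [hp]
      linarith [hftc, hq, hkey2]
    · rw [hsnd]


end
end

section
/- Strict single-dippedness of the equilibrium assignment under log-supermodularity: Suppose V(x,η) = v(x, ∫_Y m(x,y) dη(y)), where m : X × Y → ℝ is twice continuously differentiable with m_y > 0 everywhere, v : X × Z → ℝ is twice continuously differentiable with v_z > 0, v_zz < 0 and v_xz > 0 everywhere (Z a compact interval containing all values ∫_Y m(x,y) dη(y) for (x,η) ∈ X × Δ(Y)), and m_y is strictly log-supermodular: for every x ∈ X, the map y ↦ m_xy(x,y)/m_y(x,y) is strictly increasing on Y. Then for every competitive equilibrium (γ; p, q), the assignment γ is strictly single-dipped. -/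
open MeasureTheory Set
open scoped NNReal

noncomputable section

/-- The Kantorovich–Rubinstein distance between two Borel probability measures on a
metric space: `d_KR(η,η̂) = sup { ∫ f dη − ∫ f dη̂ : f 1-Lipschitz }`. -/
def krDist {Z : Type*} [MeasurableSpace Z] [MetricSpace Z]
    (η η' : ProbabilityMeasure Z) : ℝ :=
  sSup { d : ℝ | ∃ f : Z → ℝ, LipschitzWith 1 f ∧
    d = (∫ z, f z ∂(η : Measure Z)) - ∫ z, f z ∂(η' : Measure Z) }

/-- Borel σ-algebra on the space of probability measures with its weak topology. -/
instance instMeasurableSpaceProbabilityMeasure {Z : Type*} [MeasurableSpace Z]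
    [TopologicalSpace Z] [OpensMeasurableSpace Z] :
    MeasurableSpace (ProbabilityMeasure Z) := borel _

/-- The Dirac measure at `y` as a probability measure. -/
def diracPM (y : ℝ) : ProbabilityMeasure ℝ := ⟨Measure.dirac y, inferInstance⟩

/-- `Δ([a,b])`: probability measures on `ℝ` concentrated on `[a,b]`. -/
def DeltaOn (a b : ℝ) : Set (ProbabilityMeasure ℝ) :=
  {η : ProbabilityMeasure ℝ | (η : Measure ℝ) (Set.Icc a b)ᶜ = 0}

/-- An assignment for `(μ,ν)` (with `X = [x0,x1]`, `Y = [y0,y1]`): a probability measure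
on `X × Δ(Y)` whose `X`-marginal is `μ` and which averages to `ν`. -/
def IsAssignmentR (μ ν : Measure ℝ) (γ : Measure (ℝ × ProbabilityMeasure ℝ)) : Prop :=
  IsProbabilityMeasure γ ∧
  γ.map Prod.fst = μ ∧
  ∀ g : BoundedContinuousFunction ℝ ℝ,
    (∫ a, (∫ y, g y ∂(a.2 : Measure ℝ)) ∂γ) = ∫ y, g y ∂ν

/-- Competitive equilibrium on `X × Δ(Y)` with `X = [x0,x1]`, `Y = [y0,y1]`:
an assignment with Lipschitz prices, zero profits on the support, and no profitable entry. -/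
def IsCEIcc (x0 x1 y0 y1 : ℝ) (V : ℝ → ProbabilityMeasure ℝ → ℝ) (μ ν : Measure ℝ)
    (γ : Measure (ℝ × ProbabilityMeasure ℝ)) (p q : ℝ → ℝ) : Prop :=
  IsAssignmentR μ ν γ ∧
  (∃ K : ℝ≥0, LipschitzOnWith K p (Set.Icc x0 x1)) ∧
  (∃ K : ℝ≥0, LipschitzOnWith K q (Set.Icc y0 y1)) ∧
  (∀ a ∈ msupport γ, p a.1 + (∫ y, q y ∂(a.2 : Measure ℝ)) = V a.1 a.2) ∧
  (∀ x ∈ Set.Icc x0 x1, ∀ η ∈ DeltaOn y0 y1,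
    V x η ≤ p x + ∫ y, q y ∂(η : Measure ℝ))

/-- The PAS assignment: the law of `(x, δ_{S(x)})` when `x ∼ μ`. -/
def pasAssignment (μ : Measure ℝ) (S : ℝ → ℝ) : Measure (ℝ × ProbabilityMeasure ℝ) :=
  μ.map fun x => (x, diracPM (S x))


/-- An assignment `γ` is strictly single-dipped: there is a full-measure Borel set `X*`
and functions `ρ, T_d, T_u` such that on `X*` every matched workforce is a two-point
mixture `(1−ρ(x))δ_{T_d(x)} + ρ(x)δ_{T_u(x)}`, and for `x < x'` in `X*` neither `T_d(x')`
nor `T_u(x')` lies in the open interval `(T_d(x), T_u(x))`. -/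
def StrictlySingleDipped (x0 x1 y0 y1 : ℝ) (μ : Measure ℝ)
    (γ : Measure (ℝ × ProbabilityMeasure ℝ)) : Prop :=
  ∃ Xs : Set ℝ, MeasurableSet Xs ∧ Xs ⊆ Set.Icc x0 x1 ∧ μ Xs = 1 ∧
    ∃ ρ Td Tu : ℝ → ℝ,
      (∀ x ∈ Xs, ρ x ∈ Set.Icc (0:ℝ) 1 ∧ Td x ∈ Set.Icc y0 y1 ∧
        Tu x ∈ Set.Icc y0 y1 ∧ Td x ≤ Tu x) ∧
      (∀ a ∈ msupport γ, a.1 ∈ Xs →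
        (a.2 : Measure ℝ) = ENNReal.ofReal (1 - ρ a.1) • Measure.dirac (Td a.1)
          + ENNReal.ofReal (ρ a.1) • Measure.dirac (Tu a.1)) ∧
      (∀ x ∈ Xs, ∀ x' ∈ Xs, x < x' →
        Td x' ∉ Set.Ioo (Td x) (Tu x) ∧ Tu x' ∉ Set.Ioo (Td x) (Tu x))

-- helpers part 1
section Helpers
open Filter Topology

/-- clamp to [a,b] -/
def clIcc (a b t : ℝ) : ℝ := max a (min t b)

lemma clIcc_continuous (a b : ℝ) : Continuous (clIcc a b) :=
  continuous_const.max (continuous_id.min continuous_const)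

lemma clIcc_mem {a b : ℝ} (hab : a ≤ b) (t : ℝ) : clIcc a b t ∈ Set.Icc a b :=
  ⟨le_max_left _ _, max_le hab (min_le_right _ _)⟩

lemma clIcc_eq {a b t : ℝ} (ht : t ∈ Set.Icc a b) : clIcc a b t = t := by
  have := ht.1; have := ht.2
  unfold clIcc
  rw [min_eq_left ht.2, max_eq_right ht.1]

lemma continuous_comp_clIcc {a b : ℝ} (hab : a ≤ b) {f : ℝ → ℝ}
    (hf : ContinuousOn f (Set.Icc a b)) : Continuous (fun t => f (clIcc a b t)) :=
  hf.comp_continuous (clIcc_continuous a b) (clIcc_mem hab)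

lemma integrable_comp_clIcc {a b : ℝ} (hab : a ≤ b) {f : ℝ → ℝ}
    (hf : ContinuousOn f (Set.Icc a b)) (η : Measure ℝ) [IsFiniteMeasure η] :
    Integrable (fun t => f (clIcc a b t)) η := by
  obtain ⟨M, hM⟩ := (isCompact_Icc (a := a) (b := b)).exists_bound_of_continuousOn hf
  refine (integrable_const M).mono'
    ((continuous_comp_clIcc hab hf).aestronglyMeasurable) ?_
  exact Filter.Eventually.of_forall fun t => hM _ (clIcc_mem hab t)

lemma ae_mem_Icc_of_conc {a b : ℝ} {η : Measure ℝ} (h : η (Set.Icc a b)ᶜ = 0) :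
    ∀ᵐ t ∂η, t ∈ Set.Icc a b := by
  rw [MeasureTheory.ae_iff]
  have he : {t | ¬ t ∈ Set.Icc a b} = (Set.Icc a b)ᶜ := rfl
  rw [he]; exact h

lemma integral_clIcc_congr {a b : ℝ} {η : Measure ℝ} (h : η (Set.Icc a b)ᶜ = 0)
    (f : ℝ → ℝ) : ∫ t, f t ∂η = ∫ t, f (clIcc a b t) ∂η := by
  refine MeasureTheory.integral_congr_ae ?_
  filter_upwards [ae_mem_Icc_of_conc h] with t ht
  rw [clIcc_eq ht]

/-- right-derivative comparison -/
lemma deriv_le_of_le_linear {g : ℝ → ℝ} {D c : ℝ} (hg : HasDerivAt g D 0) (h0 : g 0 = 0)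
    (hle : ∀ t ∈ Set.Ioc (0:ℝ) 1, g t ≤ t * c) : D ≤ c := by
  have hs : Filter.Tendsto (slope g 0) (𝓝[>] (0:ℝ)) (𝓝 D) :=
    ((hasDerivAt_iff_tendsto_slope).1 hg).mono_left
      (nhdsWithin_mono 0 (fun t ht => by simpa using ne_of_gt ht))
  refine le_of_tendsto hs ?_
  filter_upwards [Ioc_mem_nhdsGT_of_mem (by constructor <;> norm_num : (0:ℝ) ∈ Set.Ico (0:ℝ) 1)]
    with t ht
  have ht0 : (0:ℝ) < t := ht.1
  rw [slope_def_field, h0, sub_zero, sub_zero, div_le_iff₀ ht0]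
  have := hle t ht
  linarith
end Helpers
section Helpers2
open Filter Topology

lemma myStrictConcave {z0 z1 : ℝ} {f f' f'' : ℝ → ℝ}
    (h1 : ∀ z ∈ Set.Icc z0 z1, HasDerivAt f (f' z) z)
    (h2 : ∀ z ∈ Set.Icc z0 z1, HasDerivAt f' (f'' z) z)
    (h3 : ∀ z ∈ Set.Icc z0 z1, f'' z < 0) :
    StrictConcaveOn ℝ (Set.Icc z0 z1) f := by
  refine strictConcaveOn_of_deriv2_neg (convex_Icc _ _)
    (fun z hz => (h1 z hz).continuousAt.continuousWithinAt) (fun z hz => ?_)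
  rw [interior_Icc] at hz
  have hev : deriv f =ᶠ[nhds z] f' := by
    filter_upwards [Ioo_mem_nhds hz.1 hz.2] with t ht
    exact (h1 t (Set.Ioo_subset_Icc_self ht)).deriv
  have : deriv (deriv f) z = f'' z := by
    rw [Filter.EventuallyEq.deriv_eq hev]
    exact (h2 z (Set.Ioo_subset_Icc_self hz)).deriv
  show deriv^[2] f z < 0
  rw [show deriv^[2] f = deriv (deriv f) from rfl, this]
  exact h3 z (Set.Ioo_subset_Icc_self hz)

lemma lt_of_deriv_pos_Icc {a b : ℝ} (hab : a < b) {f f' : ℝ → ℝ}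
    (h1 : ∀ y ∈ Set.Icc a b, HasDerivAt f (f' y) y)
    (h2 : ∀ y ∈ Set.Icc a b, 0 < f' y) : f a < f b := by
  obtain ⟨c, hc, hceq⟩ := exists_hasDerivAt_eq_slope f f' hab
    (fun y hy => (h1 y hy).continuousAt.continuousWithinAt)
    (fun y hy => h1 y (Set.Ioo_subset_Icc_self hy))
  have hthis := h2 c (Set.Ioo_subset_Icc_self hc)
  rw [hceq] at hthis
  have hba : (0:ℝ) < b - a := by linarith
  have h2' := mul_pos hthis hba
  rw [div_mul_cancel₀ _ (ne_of_gt hba)] at h2'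
  linarith

/-- strict log-supermodularity gives the cross-ratio inequality -/
lemma cross_ratio_lt {x0 x1 y0 y1 : ℝ} {my mxy : ℝ → ℝ → ℝ}
    (hmxy : ∀ x ∈ Set.Icc x0 x1, ∀ y ∈ Set.Icc y0 y1,
      HasDerivAt (fun t => my t y) (mxy x y) x)
    (hmypos : ∀ x ∈ Set.Icc x0 x1, ∀ y ∈ Set.Icc y0 y1, 0 < my x y)
    (hlsm : ∀ x ∈ Set.Icc x0 x1, StrictMonoOn (fun y => mxy x y / my x y) (Set.Icc y0 y1))
    {x x' ya yb : ℝ} (hxm : x ∈ Set.Icc x0 x1) (hxm' : x' ∈ Set.Icc x0 x1)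
    (hxx : x < x') (hya : ya ∈ Set.Icc y0 y1) (hyb : yb ∈ Set.Icc y0 y1) (hab : ya < yb) :
    my x yb * my x' ya < my x' yb * my x ya := by
  have hsub : Set.Icc x x' ⊆ Set.Icc x0 x1 := Set.Icc_subset_Icc hxm.1 hxm'.2
  set G : ℝ → ℝ := fun t => Real.log (my t yb) - Real.log (my t ya) with hG
  have hGd : ∀ t ∈ Set.Icc x x', HasDerivAt G (mxy t yb / my t yb - mxy t ya / my t ya) t := by
    intro t ht
    exact ((hmxy t (hsub ht) yb hyb).log (ne_of_gt (hmypos t (hsub ht) yb hyb))).sub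
      ((hmxy t (hsub ht) ya hya).log (ne_of_gt (hmypos t (hsub ht) ya hya)))
  obtain ⟨c, hc, hceq⟩ := exists_hasDerivAt_eq_slope G
    (fun t => mxy t yb / my t yb - mxy t ya / my t ya) hxx
    (fun t ht => (hGd t ht).continuousAt.continuousWithinAt)
    (fun t ht => hGd t (Set.Ioo_subset_Icc_self ht))
  have hcI : c ∈ Set.Icc x0 x1 := hsub (Set.Ioo_subset_Icc_self hc)
  have hpos : 0 < mxy c yb / my c yb - mxy c ya / my c ya := by
    have := hlsm c hcI hya hyb hab
    simpa using sub_pos.2 this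
  rw [hceq] at hpos
  have hGlt : G x < G x' := by
    have hba : (0:ℝ) < x' - x := by linarith
    have h2' := mul_pos hpos hba
    rw [div_mul_cancel₀ _ (ne_of_gt hba)] at h2'
    linarith
  -- unpack logs
  have pa : 0 < my x ya := hmypos x hxm ya hya
  have pb : 0 < my x yb := hmypos x hxm yb hyb
  have pa' : 0 < my x' ya := hmypos x' hxm' ya hya
  have pb' : 0 < my x' yb := hmypos x' hxm' yb hyb
  have : Real.log (my x yb) + Real.log (my x' ya) < Real.log (my x' yb) + Real.log (my x ya) := by
    simp only [hG] at hGlt; linarith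
  rw [← Real.log_mul (ne_of_gt pb) (ne_of_gt pa'), ← Real.log_mul (ne_of_gt pb') (ne_of_gt pa)]
    at this
  exact (Real.log_lt_log_iff (mul_pos pb pa') (mul_pos pb' pa)).1 this

end Helpers2
section Helpers3
open Filter Topology
open scoped ENNReal

/-- Core single-crossing lemma. -/
lemma no_interior_dip {y0 y1 : ℝ} {d D : ℝ → ℝ}
    (hd : ∀ y ∈ Set.Icc y0 y1, HasDerivAt d (D y) y)
    {a yy b : ℝ} (ha : a ∈ Set.Icc y0 y1) (hb : b ∈ Set.Icc y0 y1)
    (h1 : a < yy) (h2 : yy < b)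
    (hva : d yy ≤ d a) (hvb : d yy ≤ d b)
    (hcross : ∀ c1 ∈ Set.Icc y0 y1, ∀ c2 ∈ Set.Icc y0 y1, c1 < c2 →
      D c1 ≤ 0 → 0 ≤ D c2 → False) : False := by
  have hyI : yy ∈ Set.Icc y0 y1 := ⟨le_trans ha.1 h1.le, le_trans h2.le hb.2⟩
  have hsub1 : Set.Icc a yy ⊆ Set.Icc y0 y1 := Set.Icc_subset_Icc ha.1 hyI.2
  have hsub2 : Set.Icc yy b ⊆ Set.Icc y0 y1 := Set.Icc_subset_Icc hyI.1 hb.2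
  obtain ⟨c1, hc1, hc1eq⟩ := exists_hasDerivAt_eq_slope d D h1
    (fun t ht => (hd t (hsub1 ht)).continuousAt.continuousWithinAt)
    (fun t ht => hd t (hsub1 (Set.Ioo_subset_Icc_self ht)))
  obtain ⟨c2, hc2, hc2eq⟩ := exists_hasDerivAt_eq_slope d D h2
    (fun t ht => (hd t (hsub2 ht)).continuousAt.continuousWithinAt)
    (fun t ht => hd t (hsub2 (Set.Ioo_subset_Icc_self ht)))
  have hD1 : D c1 ≤ 0 := by
    rw [hc1eq]
    apply div_nonpos_of_nonpos_of_nonneg <;> linarith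
  have hD2 : 0 ≤ D c2 := by
    rw [hc2eq]
    apply div_nonneg <;> linarith
  exact hcross c1 (hsub1 (Set.Ioo_subset_Icc_self hc1)) c2 (hsub2 (Set.Ioo_subset_Icc_self hc2))
    (lt_trans hc1.2 hc2.1) hD1 hD2

/-- A probability measure vanishing outside `{a}` is `dirac a`. -/
lemma eq_dirac_of_null_compl (η : Measure ℝ) [IsProbabilityMeasure η] (a : ℝ)
    (h : η ({a} : Set ℝ)ᶜ = 0) : η = Measure.dirac a := by
  have ha : η {a} = 1 := by
    have := measure_add_measure_compl (μ := η) (measurableSet_singleton a)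
    rw [h, add_zero] at this
    simpa using this
  ext s hs
  rw [Measure.dirac_apply' a hs]
  rcases Classical.em (a ∈ s) with hmem | hmem
  · have h1 : η s = η (s ∩ {a}) + η (s \ {a}) :=
      (measure_inter_add_diff s (measurableSet_singleton a)).symm
    have h2 : s ∩ {a} = {a} := by
      apply Set.eq_of_subset_of_subset (Set.inter_subset_right)
      rintro t rfl; exact ⟨hmem, rfl⟩
    have h3 : η (s \ {a}) = 0 := measure_mono_null (Set.diff_subset_compl _ _) h
    rw [h1, h2, h3, ha, add_zero]
    simp [Set.indicator_of_mem hmem]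
  · have hsc : η s ≤ η ({a} : Set ℝ)ᶜ := by
      apply measure_mono
      rintro t ht rfl
      exact hmem ht
    rw [Set.indicator_of_notMem hmem]
    exact le_antisymm (by rw [← h]; exact hsc) zero_le

/-- A probability measure vanishing outside `{a,b}` is a two-point combination. -/
lemma eq_two_point_of_null_compl (η : Measure ℝ) (a b : ℝ) (hab : a ≠ b)
    (h : η ({a, b} : Set ℝ)ᶜ = 0) :
    η = η {a} • Measure.dirac a + η {b} • Measure.dirac b := by
  ext s hs
  have h1 : η s = η (s ∩ {a, b}) + η (s \ {a, b}) :=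
    (measure_inter_add_diff s (by measurability)).symm
  have h3 : η (s \ {a, b}) = 0 := measure_mono_null (Set.diff_subset_compl _ _) h
  have h4 : s ∩ ({a, b} : Set ℝ) = (s ∩ {a}) ∪ (s ∩ {b}) := by
    rw [← Set.inter_union_distrib_left]
    rfl
  have hdisj : Disjoint (s ∩ {a} : Set ℝ) (s ∩ {b}) :=
    Disjoint.mono Set.inter_subset_right Set.inter_subset_right
      (Set.disjoint_singleton.2 hab)
  have h5 : η (s ∩ {a, b}) = η (s ∩ {a}) + η (s ∩ {b}) := by
    rw [h4]
    exact measure_union hdisj (hs.inter (measurableSet_singleton b))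
  have hA : η (s ∩ {a}) = η {a} * Set.indicator s (fun _ => (1:ℝ≥0∞)) a := by
    rcases Classical.em (a ∈ s) with hmem | hmem
    · rw [Set.indicator_of_mem hmem, mul_one]
      congr 1
      apply Set.eq_of_subset_of_subset (Set.inter_subset_right)
      rintro t rfl; exact ⟨hmem, rfl⟩
    · rw [Set.indicator_of_notMem hmem, mul_zero]
      have he : s ∩ {a} = ∅ := by
        ext t
        simp only [Set.mem_inter_iff, Set.mem_singleton_iff, Set.mem_empty_iff_false,
          iff_false, not_and]
        rintro ht rfl; exact hmem ht
      rw [he, measure_empty]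
  have hB : η (s ∩ {b}) = η {b} * Set.indicator s (fun _ => (1:ℝ≥0∞)) b := by
    rcases Classical.em (b ∈ s) with hmem | hmem
    · rw [Set.indicator_of_mem hmem, mul_one]
      congr 1
      apply Set.eq_of_subset_of_subset (Set.inter_subset_right)
      rintro t rfl; exact ⟨hmem, rfl⟩
    · rw [Set.indicator_of_notMem hmem, mul_zero]
      have he : s ∩ {b} = ∅ := by
        ext t
        simp only [Set.mem_inter_iff, Set.mem_singleton_iff, Set.mem_empty_iff_false,
          iff_false, not_and]
        rintro ht rfl; exact hmem ht
      rw [he, measure_empty]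
  rw [h1, h3, add_zero, h5, hA, hB,
    Measure.add_apply, Measure.smul_apply, Measure.smul_apply,
    Measure.dirac_apply' a hs, Measure.dirac_apply' b hs, smul_eq_mul, smul_eq_mul]
  rfl

lemma integrable_smul_dirac (f : ℝ → ℝ) (a : ℝ) (c : ℝ≥0∞) (hc : c ≠ ⊤) :
    Integrable f (c • Measure.dirac a) := by
  haveI : IsFiniteMeasure (c • Measure.dirac a) := by
    constructor
    rw [Measure.smul_apply, measure_univ, smul_eq_mul, mul_one]
    exact hc.lt_top
  have hae : ∀ᵐ y ∂(c • Measure.dirac a), y = a := by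
    rw [MeasureTheory.ae_iff]
    have he : {y : ℝ | ¬ y = a} = ({a} : Set ℝ)ᶜ := rfl
    rw [he, Measure.smul_apply, Measure.dirac_apply' _ (measurableSet_singleton a).compl]
    simp
  refine (integrable_const (f a)).congr ?_
  filter_upwards [hae] with y hy
  rw [hy]

lemma integral_smul_dirac (f : ℝ → ℝ) (a : ℝ) (c : ℝ≥0∞) :
    ∫ y, f y ∂(c • Measure.dirac a) = c.toReal * f a := by
  rw [MeasureTheory.integral_smul_measure, MeasureTheory.integral_dirac, smul_eq_mul]

lemma integral_mix (f : ℝ → ℝ) (η : Measure ℝ) (hf : Integrable f η) (a : ℝ)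
    (c c' : ℝ≥0∞) (hc : c ≠ ⊤) (hc' : c' ≠ ⊤) :
    ∫ y, f y ∂(c • η + c' • Measure.dirac a)
      = c.toReal * ∫ y, f y ∂η + c'.toReal * f a := by
  rw [MeasureTheory.integral_add_measure (hf.smul_measure hc) (integrable_smul_dirac f a c' hc'),
    MeasureTheory.integral_smul_measure, integral_smul_dirac, smul_eq_mul]

lemma integral_two_point (f : ℝ → ℝ) (a b : ℝ) (c c' : ℝ≥0∞) (hc : c ≠ ⊤) (hc' : c' ≠ ⊤) :
    ∫ y, f y ∂(c • Measure.dirac a + c' • Measure.dirac b)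
      = c.toReal * f a + c'.toReal * f b := by
  rw [MeasureTheory.integral_add_measure (integrable_smul_dirac f a c hc)
    (integrable_smul_dirac f b c' hc'), integral_smul_dirac, integral_smul_dirac]

end Helpers3
section Helpers4
open Filter Topology
open scoped ENNReal BoundedContinuousFunction

instance : BorelSpace (ProbabilityMeasure ℝ) := ⟨rfl⟩

/-- first coordinate of a support point lies where the first marginal is concentrated -/
lemma msupport_fst_mem {γ : Measure (ℝ × ProbabilityMeasure ℝ)} {μ : Measure ℝ}
    (hmarg : γ.map Prod.fst = μ) {x0 x1 : ℝ} (hμc : μ (Set.Icc x0 x1)ᶜ = 0)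
    {a : ℝ × ProbabilityMeasure ℝ} (ha : a ∈ msupport γ) : a.1 ∈ Set.Icc x0 x1 := by
  by_contra hmem
  have hopen : IsOpen ((Set.Icc x0 x1)ᶜ ×ˢ (Set.univ : Set (ProbabilityMeasure ℝ))) :=
    (isClosed_Icc.isOpen_compl).prod isOpen_univ
  have hmem' : a ∈ (Set.Icc x0 x1)ᶜ ×ˢ (Set.univ : Set (ProbabilityMeasure ℝ)) :=
    ⟨hmem, Set.mem_univ _⟩
  have hpos := ha _ hopen hmem'
  have heq : ((Set.Icc x0 x1)ᶜ ×ˢ (Set.univ : Set (ProbabilityMeasure ℝ)))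
      = Prod.fst ⁻¹' (Set.Icc x0 x1)ᶜ := by
    ext b; simp
  rw [heq] at hpos
  rw [← Measure.map_apply measurable_fst measurableSet_Icc.compl, hmarg, hμc] at hpos
  exact lt_irrefl _ hpos

/-- the second coordinate of any support point is concentrated on `[y0,y1]`. -/
lemma msupport_snd_conc {γ : Measure (ℝ × ProbabilityMeasure ℝ)} [IsProbabilityMeasure γ]
    {ν : Measure ℝ} [IsProbabilityMeasure ν] {y0 y1 : ℝ} (hy : y0 ≤ y1)
    (havg : ∀ g : BoundedContinuousFunction ℝ ℝ,
      (∫ a, (∫ y, g y ∂(a.2 : Measure ℝ)) ∂γ) = ∫ y, g y ∂ν)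
    (hνc : ν (Set.Icc y0 y1)ᶜ = 0)
    {a : ℝ × ProbabilityMeasure ℝ} (ha : a ∈ msupport γ) :
    (a.2 : Measure ℝ) (Set.Icc y0 y1)ᶜ = 0 := by
  by_contra hpos0
  set g0 : ℝ → ℝ := fun y => min (Metric.infDist y (Set.Icc y0 y1)) 1 with hg0
  have hg0c : Continuous g0 := (Metric.continuous_infDist_pt _).min continuous_const
  have hg0nn : ∀ y, 0 ≤ g0 y := fun y => le_min Metric.infDist_nonneg zero_le_one
  have hg0b : ∀ y, ‖g0 y‖ ≤ 1 := by
    intro y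
    rw [Real.norm_eq_abs, abs_of_nonneg (hg0nn y)]
    exact min_le_right _ _
  set g : BoundedContinuousFunction ℝ ℝ :=
    BoundedContinuousFunction.ofNormedAddCommGroup g0 hg0c 1 hg0b with hgdef
  have hg0zero : ∀ y ∈ Set.Icc y0 y1, g0 y = 0 := by
    intro y hyy
    have : Metric.infDist y (Set.Icc y0 y1) = 0 := Metric.infDist_zero_of_mem hyy
    simp [hg0, this]
  have hg0posc : ∀ y, y ∉ Set.Icc y0 y1 → 0 < g0 y := by
    intro y hyy
    have hne : (Set.Icc y0 y1).Nonempty := Set.nonempty_Icc.2 hy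
    have := (isClosed_Icc.notMem_iff_infDist_pos hne).1 hyy
    exact lt_min this zero_lt_one
  have hν0 : ∫ y, g y ∂ν = 0 := by
    refine (MeasureTheory.integral_eq_zero_iff_of_nonneg_ae
      (Filter.Eventually.of_forall fun y => hg0nn y) (g.integrable ν)).2 ?_
    filter_upwards [ae_mem_Icc_of_conc hνc] with y hyy
    exact hg0zero y hyy
  set F : ℝ × ProbabilityMeasure ℝ → ℝ := fun b => ∫ y, g y ∂(b.2 : Measure ℝ) with hF
  have hFc : Continuous F :=
    (MeasureTheory.ProbabilityMeasure.continuous_integral_boundedContinuousFunction g).comp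
      continuous_snd
  have hFnn : ∀ b, 0 ≤ F b := fun b =>
    MeasureTheory.integral_nonneg fun y => hg0nn y
  have hFb : ∀ b, ‖F b‖ ≤ 1 := by
    intro b
    rw [Real.norm_eq_abs, abs_of_nonneg (hFnn b)]
    calc F b ≤ ∫ _, (1:ℝ) ∂(b.2 : Measure ℝ) := by
          apply MeasureTheory.integral_mono (g.integrable _) (integrable_const 1)
          intro y
          have := hg0b y
          rw [Real.norm_eq_abs, abs_of_nonneg (hg0nn y)] at this
          exact this
      _ = 1 := by simp
  have hFint : Integrable F γ :=
    (integrable_const (1:ℝ)).mono' hFc.aestronglyMeasurable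
      (Filter.Eventually.of_forall hFb)
  have hFzero : ∫ b, F b ∂γ = 0 := by rw [hF]; rw [havg g, hν0]
  have hFae : ∀ᵐ b ∂γ, F b = 0 := by
    have := (MeasureTheory.integral_eq_zero_iff_of_nonneg_ae
      (Filter.Eventually.of_forall hFnn) hFint).1 hFzero
    filter_upwards [this] with b hb
    simpa using hb
  have hFa : 0 < F a := by
    rcases lt_or_eq_of_le (hFnn a) with h | h
    · exact h
    · exfalso
      have hgae := (MeasureTheory.integral_eq_zero_iff_of_nonneg_ae
        (Filter.Eventually.of_forall fun y => hg0nn y)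
        (g.integrable (a.2 : Measure ℝ))).1 h.symm
      have hgae' : ∀ᵐ y ∂(a.2 : Measure ℝ), g0 y = 0 := by
        filter_upwards [hgae] with y hyy
        simpa using hyy
      rw [MeasureTheory.ae_iff] at hgae'
      apply hpos0
      apply measure_mono_null _ hgae'
      intro y hyy
      exact ne_of_gt (hg0posc y hyy)
  have hopen : IsOpen (F ⁻¹' Set.Ioi 0) := hFc.isOpen_preimage _ isOpen_Ioi
  have hposset := ha _ hopen hFa
  rw [MeasureTheory.ae_iff] at hFae
  have hnull : γ (F ⁻¹' Set.Ioi 0) = 0 := by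
    apply measure_mono_null _ hFae
    intro b hb
    exact ne_of_gt hb
  rw [hnull] at hposset
  exact lt_irrefl _ hposset

/-- a measure with a positive continuous density has no atoms; countable sets are null -/
lemma countable_null_of_cdf {x0 x1 : ℝ} (hx : x0 < x1) {μ : Measure ℝ}
    (hμ : HasPosDensityCDF x0 x1 μ) {s : Set ℝ} (hs : s.Countable) : μ s = 0 := by
  obtain ⟨hprob, hconc, f, hfc, hfpos, hcdf⟩ := hμ
  haveI := hprob
  obtain ⟨M, hM⟩ := (isCompact_Icc (a := x0) (b := x1)).exists_bound_of_continuousOn hfc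
  have hM0 : 0 ≤ M := le_trans (norm_nonneg _) (hM x0 ⟨le_refl _, hx.le⟩)
  have hsing : ∀ t : ℝ, μ {t} = 0 := by
    intro t
    by_cases ht : t ∈ Set.Icc x0 x1
    · have hx00 : μ (Set.Iic x0) ≠ ⊤ := measure_ne_top _ _
      have hiic : μ (Set.Iic x0) = 0 := by
        have h0 : cdfOf μ x0 = 0 := by
          rw [hcdf x0 ⟨le_refl _, hx.le⟩, intervalIntegral.integral_same]
        rw [cdfOf] at h0
        exact ((ENNReal.toReal_eq_zero_iff _).1 h0).resolve_right hx00
      rcases eq_or_lt_of_le ht.1 with heq | hlt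
      · exact measure_mono_null (Set.singleton_subset_iff.2 (show t ∈ Set.Iic x0 from le_of_eq heq.symm)) hiic
      · -- t ∈ (x0, x1]
        have hint : ∀ s' ∈ Set.Icc x0 x1, IntervalIntegrable f MeasureTheory.volume x0 s' := by
          intro s' hs'
          apply ContinuousOn.intervalIntegrable
          apply hfc.mono
          rw [Set.uIcc_of_le hs'.1]
          exact Set.Icc_subset_Icc (le_refl _) hs'.2
        have hkey : ∀ s', s' ∈ Set.Ico x0 t → (μ {t}).toReal ≤ M * (t - s') := by
          intro s' hs'
          have hs'I : s' ∈ Set.Icc x0 x1 := ⟨hs'.1, le_trans hs'.2.le ht.2⟩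
          have hsub : {t} ⊆ Set.Ioc s' t := by
            intro u hu; rw [Set.mem_singleton_iff] at hu; rw [hu]; exact ⟨hs'.2, le_refl _⟩
          have hmono : μ {t} ≤ μ (Set.Ioc s' t) := measure_mono hsub
          have hioc : μ (Set.Ioc s' t) = μ (Set.Iic t) - μ (Set.Iic s') := by
            rw [← Set.Iic_sdiff_Iic]
            exact measure_diff (Set.Iic_subset_Iic.2 hs'.2.le) measurableSet_Iic.nullMeasurableSet
              (measure_ne_top _ _)
          have hle : μ (Set.Iic s') ≤ μ (Set.Iic t) := measure_mono (Set.Iic_subset_Iic.2 hs'.2.le)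
          have htoReal : (μ (Set.Ioc s' t)).toReal = cdfOf μ t - cdfOf μ s' := by
            rw [hioc, ENNReal.toReal_sub_of_le hle (measure_ne_top _ _)]
            rfl
          have hcdfsub : cdfOf μ t - cdfOf μ s' = ∫ u in s'..t, f u := by
            rw [hcdf t ht, hcdf s' hs'I]
            exact intervalIntegral.integral_interval_sub_left (hint t ht) (hint s' hs'I)
          have hintbd : (∫ u in s'..t, f u) ≤ M * (t - s') := by
            have h1 : (∫ u in s'..t, f u) ≤ ∫ _ in s'..t, M := by
              apply intervalIntegral.integral_mono_on hs'.2.le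
              · apply ContinuousOn.intervalIntegrable
                apply hfc.mono
                rw [Set.uIcc_of_le hs'.2.le]
                exact Set.Icc_subset_Icc hs'.1 ht.2
              · exact intervalIntegrable_const
              · intro u hu
                have huI : u ∈ Set.Icc x0 x1 := ⟨le_trans hs'.1 hu.1, le_trans hu.2 ht.2⟩
                calc f u ≤ ‖f u‖ := le_abs_self _
                  _ ≤ M := hM u huI
            rw [intervalIntegral.integral_const, smul_eq_mul] at h1
            linarith
          calc (μ {t}).toReal ≤ (μ (Set.Ioc s' t)).toReal :=
                ENNReal.toReal_mono (measure_ne_top _ _) hmono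
            _ = cdfOf μ t - cdfOf μ s' := htoReal
            _ = ∫ u in s'..t, f u := hcdfsub
            _ ≤ M * (t - s') := hintbd
        -- conclude
        set r := (μ {t}).toReal with hr
        have hr0 : 0 ≤ r := ENNReal.toReal_nonneg
        rcases eq_or_lt_of_le hr0 with hreq | hrpos
        · rw [← ENNReal.ofReal_toReal (measure_ne_top μ {t}), ← hr, ← hreq]
          simp
        · exfalso
          set s' := max x0 (t - r / (2 * (M + 1))) with hs'def
          have hMpos : (0:ℝ) < M + 1 := by linarith
          have hposq : 0 < r / (2 * (M + 1)) := by positivity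
          have hs'lt : s' < t := by
            apply max_lt hlt
            linarith
          have hs'mem : s' ∈ Set.Ico x0 t := ⟨le_max_left _ _, hs'lt⟩
          have hbd := hkey s' hs'mem
          have hts' : t - s' ≤ r / (2 * (M + 1)) := by
            have : t - r / (2 * (M + 1)) ≤ s' := le_max_right _ _
            linarith
          have : r ≤ M * (r / (2 * (M + 1))) := by
            calc r ≤ M * (t - s') := hbd
              _ ≤ M * (r / (2 * (M + 1))) := by
                  apply mul_le_mul_of_nonneg_left hts' hM0
          have hlast : M * (r / (2 * (M + 1))) < r := by
            rw [mul_div_assoc'] 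
            rw [div_lt_iff₀ (by positivity)]
            nlinarith
          linarith
    · exact measure_mono_null (Set.singleton_subset_iff.2 ht) hconc
  haveI : MeasureTheory.NullSingletonClass μ := ⟨hsing⟩
  exact hs.measure_zero μ

end Helpers4
section MainProof
open Filter Topology
open scoped ENNReal BoundedContinuousFunction

set_option maxHeartbeats 1000000 in
/-- **Strict single-dippedness of the equilibrium assignment under log-supermodularity**
(Theorem 9): with moment-measurable production `V(x,η) = v(x, ∫ m(x,y) dη(y))`, if `m_y`
is strictly log-supermodular, then every competitive-equilibrium assignment is strictly
single-dipped. -/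
theorem equilibrium_strictly_single_dipped
    (x0 x1 y0 y1 z0 z1 : ℝ) (hx : x0 < x1) (hy : y0 < y1)
    (μ ν : Measure ℝ)
    (hμ : HasPosDensityCDF x0 x1 μ) (hν : HasPosDensityCDF y0 y1 ν)
    -- the labor-input function `m` and its derivative data
    (m my mxy : ℝ → ℝ → ℝ)
    (hmZ : ∀ x ∈ Set.Icc x0 x1, ∀ y ∈ Set.Icc y0 y1, m x y ∈ Set.Icc z0 z1)
    (hmy : ∀ x ∈ Set.Icc x0 x1, ∀ y ∈ Set.Icc y0 y1,
      HasDerivAt (fun t => m x t) (my x y) y)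
    (hmxy : ∀ x ∈ Set.Icc x0 x1, ∀ y ∈ Set.Icc y0 y1,
      HasDerivAt (fun t => my t y) (mxy x y) x)
    (hmycont : ContinuousOn (fun a : ℝ × ℝ => my a.1 a.2) (Set.Icc x0 x1 ×ˢ Set.Icc y0 y1))
    (hmxycont : ContinuousOn (fun a : ℝ × ℝ => mxy a.1 a.2) (Set.Icc x0 x1 ×ˢ Set.Icc y0 y1))
    (hmypos : ∀ x ∈ Set.Icc x0 x1, ∀ y ∈ Set.Icc y0 y1, 0 < my x y)
    -- `m_y` is strictly log-supermodular
    (hlsm : ∀ x ∈ Set.Icc x0 x1, StrictMonoOn (fun y => mxy x y / my x y) (Set.Icc y0 y1))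
    -- the production function `v` and its derivative data on `Z = [z0,z1]`
    (v vz vxz vzz : ℝ → ℝ → ℝ)
    (hvz : ∀ x ∈ Set.Icc x0 x1, ∀ z ∈ Set.Icc z0 z1,
      HasDerivAt (fun t => v x t) (vz x z) z)
    (hvxz : ∀ x ∈ Set.Icc x0 x1, ∀ z ∈ Set.Icc z0 z1,
      HasDerivAt (fun t => vz t z) (vxz x z) x)
    (hvzz : ∀ x ∈ Set.Icc x0 x1, ∀ z ∈ Set.Icc z0 z1,
      HasDerivAt (fun t => vz x t) (vzz x z) z)
    (hvzcont : ContinuousOn (fun a : ℝ × ℝ => vz a.1 a.2) (Set.Icc x0 x1 ×ˢ Set.Icc z0 z1))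
    (hvxzcont : ContinuousOn (fun a : ℝ × ℝ => vxz a.1 a.2) (Set.Icc x0 x1 ×ˢ Set.Icc z0 z1))
    (hvzzcont : ContinuousOn (fun a : ℝ × ℝ => vzz a.1 a.2) (Set.Icc x0 x1 ×ˢ Set.Icc z0 z1))
    (hvzpos : ∀ x ∈ Set.Icc x0 x1, ∀ z ∈ Set.Icc z0 z1, 0 < vz x z)
    (hvxzpos : ∀ x ∈ Set.Icc x0 x1, ∀ z ∈ Set.Icc z0 z1, 0 < vxz x z)
    (hvzzneg : ∀ x ∈ Set.Icc x0 x1, ∀ z ∈ Set.Icc z0 z1, vzz x z < 0) :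
    -- every competitive-equilibrium assignment (for the moment-measurable `V`) is
    -- strictly single-dipped
    ∀ (γ : Measure (ℝ × ProbabilityMeasure ℝ)) (p q : ℝ → ℝ),
      IsCEIcc x0 x1 y0 y1
        (fun x η => v x (∫ y, m x y ∂(η : Measure ℝ))) μ ν γ p q →
      StrictlySingleDipped x0 x1 y0 y1 μ γ := by
  classical
  intro γ p q hce
  obtain ⟨⟨hprobγ, hmarg, havg⟩, ⟨Kp, hp⟩, ⟨Kq, hq⟩, hzero, hentry⟩ := hce
  haveI := hprobγ
  haveI : IsProbabilityMeasure μ := hμ.1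
  haveI : IsProbabilityMeasure ν := hν.1
  have hy01 : y0 ≤ y1 := hy.le
  set cl : ℝ → ℝ := clIcc y0 y1 with hcl
  have hclmem : ∀ t, cl t ∈ Set.Icc y0 y1 := clIcc_mem hy01
  have hcleq : ∀ t ∈ Set.Icc y0 y1, cl t = t := fun t ht => clIcc_eq ht
  -- support points live over X and are concentrated on Y
  have hsupX : ∀ a ∈ msupport γ, a.1 ∈ Set.Icc x0 x1 :=
    fun a ha => msupport_fst_mem hmarg hμ.2.1 ha
  have hsupY : ∀ a ∈ msupport γ, (a.2 : Measure ℝ) (Set.Icc y0 y1)ᶜ = 0 :=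
    fun a ha => msupport_snd_conc hy01 havg hν.2.1 ha
  -- fibers and a measurable-choice selection
  set Fib : ℝ → Set (ProbabilityMeasure ℝ) := fun x => {η | (x, η) ∈ msupport γ} with hFib
  set sel : ℝ → ProbabilityMeasure ℝ :=
    fun x => if h : (Fib x).Nonempty then h.some else diracPM y0 with hseldef
  have hsel : ∀ x, (Fib x).Nonempty → (x, sel x) ∈ msupport γ := by
    intro x h
    have : sel x = h.some := by rw [hseldef]; exact dif_pos h
    rw [this]
    exact h.some_mem
  -- clamped versions of m x and q
  set mcl : ℝ → ℝ → ℝ := fun x t => m x (cl t) with hmcl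
  set qcl : ℝ → ℝ := fun t => q (cl t) with hqcl
  have hmcont : ∀ x ∈ Set.Icc x0 x1, ContinuousOn (m x) (Set.Icc y0 y1) :=
    fun x hxI t ht => (hmy x hxI t ht).continuousAt.continuousWithinAt
  have hmclc : ∀ x ∈ Set.Icc x0 x1, Continuous (mcl x) :=
    fun x hxI => continuous_comp_clIcc hy01 (hmcont x hxI)
  have hqcont : ContinuousOn q (Set.Icc y0 y1) := hq.continuousOn
  have hqclc : Continuous qcl := continuous_comp_clIcc hy01 hqcont
  have hmint : ∀ x ∈ Set.Icc x0 x1, ∀ η : ProbabilityMeasure ℝ,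
      Integrable (mcl x) (η : Measure ℝ) :=
    fun x hxI η => integrable_comp_clIcc hy01 (hmcont x hxI) _
  have hqint : ∀ η : ProbabilityMeasure ℝ, Integrable qcl (η : Measure ℝ) :=
    fun η => integrable_comp_clIcc hy01 hqcont _
  -- derived quantities
  set zs : ℝ → ℝ := fun x => ∫ t, mcl x t ∂(sel x : Measure ℝ) with hzs
  set lam : ℝ → ℝ := fun x => vz x (zs x) with hlam
  set Cq : ℝ → ℝ := fun x => ∫ t, qcl t ∂(sel x : Measure ℝ) with hCqdef
  -- moment of any supported η is in [z0,z1]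
  have hmomIcc : ∀ x ∈ Set.Icc x0 x1, ∀ η : ProbabilityMeasure ℝ,
      (∫ t, mcl x t ∂(η : Measure ℝ)) ∈ Set.Icc z0 z1 := by
    intro x hxI η
    constructor
    · calc z0 = ∫ _, z0 ∂(η : Measure ℝ) := by simp
        _ ≤ ∫ t, mcl x t ∂(η : Measure ℝ) := by
            apply MeasureTheory.integral_mono (integrable_const _) (hmint x hxI η)
            intro t
            exact (hmZ x hxI (cl t) (hclmem t)).1
    · calc (∫ t, mcl x t ∂(η : Measure ℝ)) ≤ ∫ _, z1 ∂(η : Measure ℝ) := by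
            apply MeasureTheory.integral_mono (hmint x hxI η) (integrable_const _)
            intro t
            exact (hmZ x hxI (cl t) (hclmem t)).2
        _ = z1 := by simp
  -- zero-profit in clamped form
  have hprofit : ∀ x (η : ProbabilityMeasure ℝ), (x, η) ∈ msupport γ →
      p x + ∫ t, qcl t ∂(η : Measure ℝ) = v x (∫ t, mcl x t ∂(η : Measure ℝ)) := by
    intro x η hxη
    have h1 := hzero (x, η) hxη
    dsimp only at h1
    have hconc : (η : Measure ℝ) (Set.Icc y0 y1)ᶜ = 0 := hsupY (x, η) hxη
    rw [integral_clIcc_congr hconc q, integral_clIcc_congr hconc (m x)] at h1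
    exact h1
  -- entry in clamped form
  have hentry' : ∀ x ∈ Set.Icc x0 x1, ∀ η : ProbabilityMeasure ℝ,
      (η : Measure ℝ) (Set.Icc y0 y1)ᶜ = 0 →
      v x (∫ t, mcl x t ∂(η : Measure ℝ)) ≤ p x + ∫ t, qcl t ∂(η : Measure ℝ) := by
    intro x hxI η hconc
    have h1 := hentry x hxI η hconc
    dsimp only at h1
    rw [integral_clIcc_congr hconc q, integral_clIcc_congr hconc (m x)] at h1
    exact h1
  -- uniqueness of the moment across the fiber
  have hmom : ∀ x (η : ProbabilityMeasure ℝ), (x, η) ∈ msupport γ →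
      ∫ t, mcl x t ∂(η : Measure ℝ) = zs x := by
    intro x η hxη
    have hne : (Fib x).Nonempty := ⟨η, hxη⟩
    have hxI : x ∈ Set.Icc x0 x1 := hsupX _ hxη
    by_contra hnez
    have hzI : (∫ t, mcl x t ∂(η : Measure ℝ)) ∈ Set.Icc z0 z1 := hmomIcc x hxI η
    have hz'I : zs x ∈ Set.Icc z0 z1 := hmomIcc x hxI (sel x)
    set c : ℝ≥0∞ := ENNReal.ofReal (1/2) with hc
    have hcne : c ≠ ⊤ := ENNReal.ofReal_ne_top
    have hctor : c.toReal = 1/2 := ENNReal.toReal_ofReal (by norm_num)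
    set mm : Measure ℝ := c • (η : Measure ℝ) + c • ((sel x) : Measure ℝ) with hmm
    have hmmuniv : mm Set.univ = 1 := by
      simp only [hmm, Measure.add_apply, Measure.smul_apply, measure_univ, smul_eq_mul,
        mul_one]
      rw [hc, ← ENNReal.ofReal_add (by norm_num) (by norm_num)]
      norm_num
    haveI hmmpr : IsProbabilityMeasure mm := ⟨hmmuniv⟩
    set ηm : ProbabilityMeasure ℝ := ⟨mm, hmmpr⟩ with hηm
    have hηmcoe : (ηm : Measure ℝ) = mm := rfl
    have hconc1 := hsupY (x, η) hxη
    have hconc2 := hsupY (x, sel x) (hsel x hne)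
    have hconcm : (ηm : Measure ℝ) (Set.Icc y0 y1)ᶜ = 0 := by
      rw [hηmcoe, hmm, Measure.add_apply, Measure.smul_apply, Measure.smul_apply,
        hconc1, hconc2]
      simp
    have hint1 := hmint x hxI η
    have hint2 := hmint x hxI (sel x)
    have hintq1 := hqint η
    have hintq2 := hqint (sel x)
    have hm_mix : ∫ t, mcl x t ∂(ηm : Measure ℝ)
        = (1/2) * (∫ t, mcl x t ∂(η : Measure ℝ)) + (1/2) * zs x := by
      rw [hηmcoe, hmm, MeasureTheory.integral_add_measure (hint1.smul_measure hcne)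
        (hint2.smul_measure hcne), MeasureTheory.integral_smul_measure,
        MeasureTheory.integral_smul_measure, hctor, smul_eq_mul, smul_eq_mul]
    have hq_mix : ∫ t, qcl t ∂(ηm : Measure ℝ)
        = (1/2) * (∫ t, qcl t ∂(η : Measure ℝ)) + (1/2) * Cq x := by
      rw [hηmcoe, hmm, MeasureTheory.integral_add_measure (hintq1.smul_measure hcne)
        (hintq2.smul_measure hcne), MeasureTheory.integral_smul_measure,
        MeasureTheory.integral_smul_measure, hctor, smul_eq_mul, smul_eq_mul]
    have hev := hentry' x hxI ηm hconcm
    rw [hm_mix, hq_mix] at hev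
    have hp1 := hprofit x η hxη
    have hp2 := hprofit x (sel x) (hsel x hne)
    have hsc := myStrictConcave (hvz x hxI) (hvzz x hxI) (hvzzneg x hxI)
    have hmid := hsc.2 hzI hz'I hnez (by norm_num : (0:ℝ) < 1/2)
      (by norm_num : (0:ℝ) < 1/2) (by norm_num : (1:ℝ)/2 + 1/2 = 1)
    simp only [smul_eq_mul] at hmid
    linarith [hev, hp1, hp2, hmid]
  -- uniqueness of the wage bill across the fiber
  have hCq : ∀ x (η : ProbabilityMeasure ℝ), (x, η) ∈ msupport γ →
      ∫ t, qcl t ∂(η : Measure ℝ) = Cq x := by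
    intro x η hxη
    have hne : (Fib x).Nonempty := ⟨η, hxη⟩
    have h1 := hprofit x η hxη
    have h2 := hprofit x (sel x) (hsel x hne)
    rw [hmom x η hxη] at h1
    rw [hmom x (sel x) (hsel x hne)] at h2
    have : (zs x) = ∫ t, mcl x t ∂(sel x : Measure ℝ) := rfl
    rw [hCqdef]
    linarith
  -- first-order condition
  have hFOC : ∀ x, (Fib x).Nonempty → ∀ yy ∈ Set.Icc y0 y1,
      lam x * m x yy - q yy ≤ lam x * zs x - Cq x := by
    intro x hne yy hyyI
    have hxI : x ∈ Set.Icc x0 x1 := hsupX _ (hsel x hne)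
    have hz'I : zs x ∈ Set.Icc z0 z1 := hmomIcc x hxI (sel x)
    have hwI : m x yy ∈ Set.Icc z0 z1 := hmZ x hxI yy hyyI
    have hpc : p x + Cq x = v x (zs x) := hprofit x (sel x) (hsel x hne)
    set G : ℝ → ℝ := fun t => v x (zs x + t * (m x yy - zs x)) - v x (zs x) with hG
    have hGd : HasDerivAt G (vz x (zs x) * (m x yy - zs x)) 0 := by
      have h1 : HasDerivAt (fun t : ℝ => zs x + t * (m x yy - zs x)) (m x yy - zs x) 0 := by
        simpa using ((hasDerivAt_id (0:ℝ)).mul_const (m x yy - zs x)).const_add (zs x)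
      have h2 := hvz x hxI (zs x) hz'I
      have h1' : ((fun t : ℝ => zs x + t * (m x yy - zs x)) 0) = zs x := by norm_num
      rw [← h1'] at h2
      have h3 := HasDerivAt.comp 0 h2 h1
      have h4 : HasDerivAt (fun t : ℝ => v x (zs x + t * (m x yy - zs x)))
          (vz x (zs x) * (m x yy - zs x)) 0 := by
        rw [h1'] at h3
        exact h3
      simpa [hG] using h4.sub_const (v x (zs x))
    have hG0 : G 0 = 0 := by simp [hG]
    have hGle : ∀ t ∈ Set.Ioc (0:ℝ) 1, G t ≤ t * (q yy - Cq x) := by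
      intro t ht
      set c1 : ℝ≥0∞ := ENNReal.ofReal (1 - t) with hc1
      set c2 : ℝ≥0∞ := ENNReal.ofReal t with hc2
      have hc1ne : c1 ≠ ⊤ := ENNReal.ofReal_ne_top
      have hc2ne : c2 ≠ ⊤ := ENNReal.ofReal_ne_top
      have ht0 : 0 ≤ t := ht.1.le
      have ht1 : 0 ≤ 1 - t := by linarith [ht.2]
      have hc1tor : c1.toReal = 1 - t := ENNReal.toReal_ofReal ht1
      have hc2tor : c2.toReal = t := ENNReal.toReal_ofReal ht0
      set mm : Measure ℝ := c1 • ((sel x) : Measure ℝ) + c2 • Measure.dirac yy with hmm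
      have hmmuniv : mm Set.univ = 1 := by
        simp only [hmm, Measure.add_apply, Measure.smul_apply, measure_univ, smul_eq_mul,
          mul_one]
        rw [hc1, hc2, ← ENNReal.ofReal_add ht1 ht0]
        norm_num
      haveI hmmpr : IsProbabilityMeasure mm := ⟨hmmuniv⟩
      set ηm : ProbabilityMeasure ℝ := ⟨mm, hmmpr⟩ with hηm
      have hηmcoe : (ηm : Measure ℝ) = mm := rfl
      have hdiracconc : (Measure.dirac yy) (Set.Icc y0 y1)ᶜ = 0 := by
        rw [Measure.dirac_apply' _ measurableSet_Icc.compl]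
        simp [hyyI]
      have hconcm : (ηm : Measure ℝ) (Set.Icc y0 y1)ᶜ = 0 := by
        rw [hηmcoe, hmm, Measure.add_apply, Measure.smul_apply, Measure.smul_apply,
          hsupY (x, sel x) (hsel x hne), hdiracconc]
        simp
      have hmclyy : mcl x yy = m x yy := by
        rw [hmcl]
        dsimp only
        rw [hcleq yy hyyI]
      have hqclyy : qcl yy = q yy := by
        rw [hqcl]
        dsimp only
        rw [hcleq yy hyyI]
      have hm_mix : ∫ s, mcl x s ∂(ηm : Measure ℝ) = (1 - t) * zs x + t * m x yy := by
        rw [hηmcoe, hmm, integral_mix _ _ (hmint x hxI (sel x)) _ _ _ hc1ne hc2ne,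
          hc1tor, hc2tor, hmclyy]
      have hq_mix : ∫ s, qcl s ∂(ηm : Measure ℝ) = (1 - t) * Cq x + t * q yy := by
        rw [hηmcoe, hmm, integral_mix _ _ (hqint (sel x)) _ _ _ hc1ne hc2ne,
          hc1tor, hc2tor, hqclyy]
      have hev := hentry' x hxI ηm hconcm
      rw [hm_mix, hq_mix] at hev
      have harg : (1 - t) * zs x + t * m x yy = zs x + t * (m x yy - zs x) := by ring
      rw [harg] at hev
      have hGt : G t = v x (zs x + t * (m x yy - zs x)) - v x (zs x) := rfl
      rw [hGt]
      linarith [hev, hpc]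
    have hD := deriv_le_of_le_linear hGd hG0 hGle
    have hexp : vz x (zs x) * (m x yy - zs x) = lam x * m x yy - lam x * zs x := by
      rw [hlam]; ring
    rw [hexp] at hD
    linarith
  -- the contact set
  set hfn : ℝ → ℝ → ℝ := fun x t => lam x * mcl x t - qcl t with hhfn
  set Cs : ℝ → Set ℝ := fun x =>
    Set.Icc y0 y1 ∩ (hfn x) ⁻¹' {lam x * zs x - Cq x} with hCsdef
  have hCsIcc : ∀ x, Cs x ⊆ Set.Icc y0 y1 := fun x => Set.inter_subset_left
  have hCsval : ∀ x, ∀ u ∈ Cs x, u ∈ Set.Icc y0 y1 ∧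
      lam x * m x u - q u = lam x * zs x - Cq x := by
    intro x u hu
    refine ⟨hu.1, ?_⟩
    have := hu.2
    simp only [Set.mem_preimage, Set.mem_singleton_iff, hhfn, hmcl, hqcl] at this
    rwa [hcleq u hu.1] at this
  have hfn_le : ∀ x, (Fib x).Nonempty → ∀ t, hfn x t ≤ lam x * zs x - Cq x := by
    intro x hne t
    have h1 := hFOC x hne (cl t) (hclmem t)
    simpa only [hhfn, hmcl, hqcl] using h1
  -- every supported η is concentrated on the contact set
  have hCsconc : ∀ x (η : ProbabilityMeasure ℝ), (x, η) ∈ msupport γ →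
      (η : Measure ℝ) (Cs x)ᶜ = 0 := by
    intro x η hxη
    have hne : (Fib x).Nonempty := ⟨η, hxη⟩
    have hxI : x ∈ Set.Icc x0 x1 := hsupX _ hxη
    have hintfn : Integrable (hfn x) (η : Measure ℝ) :=
      ((hmint x hxI η).const_mul (lam x)).sub (hqint η)
    have hintf : Integrable (fun t => (lam x * zs x - Cq x) - hfn x t) (η : Measure ℝ) :=
      (integrable_const _).sub hintfn
    have hizero : ∫ t, ((lam x * zs x - Cq x) - hfn x t) ∂(η : Measure ℝ) = 0 := by
      rw [MeasureTheory.integral_sub (integrable_const _) hintfn]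
      have h1 : ∫ t, hfn x t ∂(η : Measure ℝ)
          = lam x * (∫ t, mcl x t ∂(η : Measure ℝ)) - ∫ t, qcl t ∂(η : Measure ℝ) := by
        have h2 : ∫ t, hfn x t ∂(η : Measure ℝ)
            = ∫ t, (lam x * mcl x t - qcl t) ∂(η : Measure ℝ) := rfl
        rw [h2, MeasureTheory.integral_sub ((hmint x hxI η).const_mul (lam x)) (hqint η),
          MeasureTheory.integral_const_mul]
      rw [h1, hmom x η hxη, hCq x η hxη]
      simp
    have hae := (MeasureTheory.integral_eq_zero_iff_of_nonneg_ae
      (Filter.Eventually.of_forall (fun t => sub_nonneg.2 (hfn_le x hne t))) hintf).1 hizero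
    have hae2 : ∀ᵐ t ∂(η : Measure ℝ), hfn x t = lam x * zs x - Cq x := by
      filter_upwards [hae] with t htt
      have h3 : (lam x * zs x - Cq x) - hfn x t = 0 := by simpa using htt
      linarith
    have hae3 := ae_mem_Icc_of_conc (hsupY (x, η) hxη)
    have hfinal : ∀ᵐ t ∂(η : Measure ℝ), t ∈ Cs x := by
      filter_upwards [hae2, hae3] with t h1 h2
      exact Set.mem_inter h2 (by simpa using h1)
    rw [MeasureTheory.ae_iff] at hfinal
    have he : {t | ¬ t ∈ Cs x} = (Cs x)ᶜ := rfl
    rw [he] at hfinal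
    exact hfinal
  have hCsclosed : ∀ x ∈ Set.Icc x0 x1, IsClosed (Cs x) := by
    intro x hxI
    apply isClosed_Icc.inter
    apply IsClosed.preimage _ isClosed_singleton
    exact (continuous_const.mul (hmclc x hxI)).sub hqclc
  have hCsne : ∀ x, (Fib x).Nonempty → (Cs x).Nonempty := by
    intro x hne
    rw [Set.nonempty_iff_ne_empty]
    intro hempty
    have h1 := hCsconc x (sel x) (hsel x hne)
    rw [hempty, Set.compl_empty] at h1
    rw [measure_univ] at h1
    exact one_ne_zero h1
  have hbddB : ∀ x, BddBelow (Cs x) := fun x => ⟨y0, fun t ht => (hCsIcc x ht).1⟩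
  have hbddA : ∀ x, BddAbove (Cs x) := fun x => ⟨y1, fun t ht => (hCsIcc x ht).2⟩
  -- fiber nonempty ⇒ x ∈ X, and λ > 0
  have hfibX : ∀ x, (Fib x).Nonempty → x ∈ Set.Icc x0 x1 :=
    fun x hne => hsupX _ (hsel x hne)
  have hzsI : ∀ x, (Fib x).Nonempty → zs x ∈ Set.Icc z0 z1 :=
    fun x hne => hmomIcc x (hfibX x hne) (sel x)
  have hlampos : ∀ x, (Fib x).Nonempty → 0 < lam x :=
    fun x hne => hvzpos x (hfibX x hne) _ (hzsI x hne)
  -- the exclusion lemma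
  have hE : ∀ x x', (Fib x).Nonempty → (Fib x').Nonempty → x < x' →
      ∀ aa ∈ Cs x, ∀ bb ∈ Cs x, ∀ yy ∈ Cs x', aa < yy → yy < bb → False := by
    intro x x' hne hne' hxx aa haa bb hbb yy hyy h1 h2
    have hxI := hfibX x hne
    have hx'I := hfibX x' hne'
    have hlp := hlampos x hne
    have hlp' := hlampos x' hne'
    set d : ℝ → ℝ := fun t => lam x * m x t - lam x' * m x' t with hd
    set D : ℝ → ℝ := fun t => lam x * my x t - lam x' * my x' t with hD
    have hdD : ∀ t ∈ Set.Icc y0 y1, HasDerivAt d (D t) t := by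
      intro t ht
      exact ((hmy x hxI t ht).const_mul (lam x)).sub ((hmy x' hx'I t ht).const_mul (lam x'))
    have hHa := hCsval x aa haa
    have hHb := hCsval x bb hbb
    have hHy := hCsval x' yy hyy
    have hub_a := hFOC x' hne' aa hHa.1
    have hub_b := hFOC x' hne' bb hHb.1
    have hub_y := hFOC x hne yy hHy.1
    have hda : d yy ≤ d aa := by
      have e1 : d aa = (lam x * m x aa - q aa) - (lam x' * m x' aa - q aa) := by
        rw [hd]; ring
      have e2 : d yy = (lam x * m x yy - q yy) - (lam x' * m x' yy - q yy) := by
        rw [hd]; ring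
      rw [e1, e2, hHa.2, hHy.2]
      linarith [hub_a, hub_y]
    have hdb : d yy ≤ d bb := by
      have e1 : d bb = (lam x * m x bb - q bb) - (lam x' * m x' bb - q bb) := by
        rw [hd]; ring
      have e2 : d yy = (lam x * m x yy - q yy) - (lam x' * m x' yy - q yy) := by
        rw [hd]; ring
      rw [e1, e2, hHb.2, hHy.2]
      linarith [hub_b, hub_y]
    refine no_interior_dip hdD hHa.1 hHb.1 h1 h2 hda hdb ?_
    intro c1 hc1 c2 hc2 hlt hD1 hD2
    have hr := cross_ratio_lt hmxy hmypos hlsm hxI hx'I hxx hc1 hc2 hlt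
    have p1 := hmypos x hxI c1 hc1
    have p2 := hmypos x hxI c2 hc2
    have p1' := hmypos x' hx'I c1 hc1
    have p2' := hmypos x' hx'I c2 hc2
    have hd1 : lam x * my x c1 ≤ lam x' * my x' c1 := by
      have he : D c1 = lam x * my x c1 - lam x' * my x' c1 := rfl
      rw [he] at hD1
      linarith
    have hd2 : lam x' * my x' c2 ≤ lam x * my x c2 := by
      have he : D c2 = lam x * my x c2 - lam x' * my x' c2 := rfl
      rw [he] at hD2
      linarith
    have q1 : lam x * my x c1 * my x' c2 ≤ lam x' * my x' c1 * my x' c2 :=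
      mul_le_mul_of_nonneg_right hd1 p2'.le
    have q2 : lam x' * my x' c2 * my x' c1 ≤ lam x * my x c2 * my x' c1 :=
      mul_le_mul_of_nonneg_right hd2 p1'.le
    have q3 : lam x * (my x c2 * my x' c1) < lam x * (my x' c2 * my x c1) :=
      mul_lt_mul_of_pos_left hr hlp
    nlinarith [q1, q2, q3]
  -- the bad set is countable
  set BAD : Set ℝ := {x | (Fib x).Nonempty ∧
    ∃ aa ∈ Cs x, ∃ bb ∈ Cs x, ∃ yy ∈ Cs x, aa < yy ∧ yy < bb} with hBADdef
  have hBADcnt : BAD.Countable := by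
    set Q : ℝ → ℚ × ℚ → Prop := fun x r =>
      ∃ aa ∈ Cs x, ∃ bb ∈ Cs x, ∃ yy ∈ Cs x,
        aa < (r.1 : ℝ) ∧ ((r.1 : ℝ) < yy) ∧ (yy < (r.2 : ℝ)) ∧ ((r.2 : ℝ) < bb) with hQ
    set R : ℝ → ℚ × ℚ := fun x => if h : ∃ r, Q x r then h.choose else (0, 0) with hR
    have hBADR : ∀ x ∈ BAD, Q x (R x) := by
      intro x hxB
      obtain ⟨hne, aa, haa, bb, hbb, yy, hyy, hl1, hl2⟩ := hxB
      obtain ⟨r1, hr1a, hr1b⟩ := exists_rat_btwn hl1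
      obtain ⟨r2, hr2a, hr2b⟩ := exists_rat_btwn hl2
      have hex : ∃ r, Q x r :=
        ⟨(r1, r2), aa, haa, bb, hbb, yy, hyy, hr1a, hr1b, hr2a, hr2b⟩
      have hrw : R x = hex.choose := by rw [hR]; exact dif_pos hex
      rw [hrw]
      exact hex.choose_spec
    have hmain : ∀ u w : ℝ, u ∈ BAD → w ∈ BAD → u < w → R u = R w → False := by
      intro u w huB hwB huw heqr
      obtain ⟨aa, haa, bb, hbb, -, -, hA1, -, -, hA4⟩ := hBADR u huB
      obtain ⟨-, -, -, -, yy, hyy, -, hB2, hB3, -⟩ := hBADR w hwB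
      rw [heqr] at hA1 hA4
      exact hE u w huB.1 hwB.1 huw aa haa bb hbb yy hyy (lt_trans hA1 hB2)
        (lt_trans hB3 hA4)
    refine Set.countable_of_injective_of_countable_image
      (f := R) (fun xA hxA xB hxB heq => ?_) (Set.to_countable _)
    by_contra hnexy
    rcases lt_or_gt_of_ne hnexy with hlt | hlt
    · exact hmain xA xB hxA hxB hlt heq
    · exact hmain xB xA hxB hxA hlt heq.symm
  set Xs : Set ℝ := Set.Icc x0 x1 \ BAD with hXsdef
  have hXsmeas : MeasurableSet Xs := measurableSet_Icc.diff hBADcnt.measurableSet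
  have hXssub : Xs ⊆ Set.Icc x0 x1 := Set.diff_subset
  have hXsfull : μ Xs = 1 := by
    have h1 : μ BAD = 0 := countable_null_of_cdf hx hμ hBADcnt
    rw [hXsdef, measure_diff_null h1]
    have h2 := measure_add_measure_compl (μ := μ) (measurableSet_Icc (a := x0) (b := x1))
    rw [hμ.2.1, add_zero] at h2
    rw [h2, measure_univ]
  -- matched extremes
  set Td : ℝ → ℝ := fun x => if (Fib x).Nonempty then sInf (Cs x) else y0 with hTddef
  set Tu : ℝ → ℝ := fun x => if (Fib x).Nonempty then sSup (Cs x) else y0 with hTudef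
  set ρ : ℝ → ℝ := fun x => if (Fib x).Nonempty ∧ Td x ≠ Tu x then
    (zs x - m x (Td x)) / (m x (Tu x) - m x (Td x)) else 1 with hρdef
  have hTdCs : ∀ x, (Fib x).Nonempty → Td x ∈ Cs x := by
    intro x hne
    have : Td x = sInf (Cs x) := if_pos hne
    rw [this]
    exact (hCsclosed x (hfibX x hne)).csInf_mem (hCsne x hne) (hbddB x)
  have hTuCs : ∀ x, (Fib x).Nonempty → Tu x ∈ Cs x := by
    intro x hne
    have : Tu x = sSup (Cs x) := if_pos hne
    rw [this]
    exact (hCsclosed x (hfibX x hne)).csSup_mem (hCsne x hne) (hbddA x)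
  have hTdTu : ∀ x, (Fib x).Nonempty → Td x ≤ Tu x := by
    intro x hne
    have h1 : Td x = sInf (Cs x) := if_pos hne
    have h2 : Tu x = sSup (Cs x) := if_pos hne
    rw [h1, h2]
    exact csInf_le_csSup (hCsne x hne) (hbddB x) (hbddA x)
  -- off the bad set the contact set is a pair
  have hCsub : ∀ x ∈ Xs, (Fib x).Nonempty → Cs x ⊆ {Td x, Tu x} := by
    intro x hxXs hne u hu
    have h1 : Td x ≤ u := by
      have : Td x = sInf (Cs x) := if_pos hne
      rw [this]; exact csInf_le (hbddB x) hu
    have h2 : u ≤ Tu x := by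
      have : Tu x = sSup (Cs x) := if_pos hne
      rw [this]; exact le_csSup (hbddA x) hu
    rcases eq_or_lt_of_le h1 with he1 | hl1
    · left; exact he1.symm
    rcases eq_or_lt_of_le h2 with he2 | hl2
    · right; exact he2
    exfalso
    exact hxXs.2 ⟨hne, Td x, hTdCs x hne, Tu x, hTuCs x hne, u, hu, hl1, hl2⟩
  -- the key two-point analysis
  have hkey : ∀ x ∈ Xs, (Fib x).Nonempty → Td x < Tu x →
      ρ x ∈ Set.Icc (0:ℝ) 1 ∧ ∀ η : ProbabilityMeasure ℝ, (x, η) ∈ msupport γ →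
        (η : Measure ℝ) = ENNReal.ofReal (1 - ρ x) • Measure.dirac (Td x)
          + ENNReal.ofReal (ρ x) • Measure.dirac (Tu x) := by
    intro x hxXs hne hlt
    have hxI := hfibX x hne
    have hTdI : Td x ∈ Set.Icc y0 y1 := hCsIcc x (hTdCs x hne)
    have hTuI : Tu x ∈ Set.Icc y0 y1 := hCsIcc x (hTuCs x hne)
    have hmlt : m x (Td x) < m x (Tu x) := by
      apply lt_of_deriv_pos_Icc hlt (f' := my x)
      · intro u hu
        exact hmy x hxI u (Set.Icc_subset_Icc hTdI.1 hTuI.2 hu)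
      · intro u hu
        exact hmypos x hxI u (Set.Icc_subset_Icc hTdI.1 hTuI.2 hu)
    have hdpos : 0 < m x (Tu x) - m x (Td x) := sub_pos.2 hmlt
    have hρformula : ρ x = (zs x - m x (Td x)) / (m x (Tu x) - m x (Td x)) := by
      rw [hρdef]
      exact if_pos ⟨hne, ne_of_lt hlt⟩
    have hmclTd : mcl x (Td x) = m x (Td x) := by
      rw [hmcl]; dsimp only; rw [hcleq _ hTdI]
    have hmclTu : mcl x (Tu x) = m x (Tu x) := by
      rw [hmcl]; dsimp only; rw [hcleq _ hTuI]
    have hdec : ∀ η : ProbabilityMeasure ℝ, (x, η) ∈ msupport γ →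
        ((η : Measure ℝ) = (η : Measure ℝ) {Td x} • Measure.dirac (Td x)
          + (η : Measure ℝ) {Tu x} • Measure.dirac (Tu x))
        ∧ ((η : Measure ℝ) {Td x}).toReal + ((η : Measure ℝ) {Tu x}).toReal = 1
        ∧ ((η : Measure ℝ) {Tu x}).toReal = ρ x := by
      intro η hfib
      have hconcC := hCsconc x η hfib
      have hsub2 : Cs x ⊆ {Td x, Tu x} := hCsub x hxXs hne
      have hcompl : (η : Measure ℝ) ({Td x, Tu x} : Set ℝ)ᶜ = 0 :=
        measure_mono_null (Set.compl_subset_compl.2 hsub2) hconcC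
      have hdecomp := eq_two_point_of_null_compl (η : Measure ℝ) (Td x) (Tu x)
        (ne_of_lt hlt) hcompl
      set ca : ℝ≥0∞ := (η : Measure ℝ) {Td x} with hca
      set cb : ℝ≥0∞ := (η : Measure ℝ) {Tu x} with hcb
      have hane : ca ≠ ⊤ := measure_ne_top _ _
      have hbne : cb ≠ ⊤ := measure_ne_top _ _
      have h3 : ca + cb = 1 := by
        have h2 := congrArg (fun μm : Measure ℝ => μm Set.univ) hdecomp
        simp only [Measure.add_apply, Measure.smul_apply, measure_univ, smul_eq_mul,
          mul_one] at h2
        exact h2.symm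
      have hsum : ca.toReal + cb.toReal = 1 := by
        rw [← ENNReal.toReal_add hane hbne, h3, ENNReal.toReal_one]
      have hmm := hmom x η hfib
      have hint2pt : ∫ t, mcl x t ∂(η : Measure ℝ)
          = ca.toReal * m x (Td x) + cb.toReal * m x (Tu x) := by
        rw [hdecomp, integral_two_point _ _ _ _ _ hane hbne, hmclTd, hmclTu]
      have hcomb : zs x = ca.toReal * m x (Td x) + cb.toReal * m x (Tu x) := by
        rw [← hmm, hint2pt]
      have hwb : cb.toReal = ρ x := by
        rw [hρformula, eq_div_iff (ne_of_gt hdpos)]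
        linear_combination (-1 : ℝ) * hcomb - m x (Td x) * hsum
      exact ⟨hdecomp, hsum, hwb⟩
    obtain ⟨hdecs, hsums, hwbs⟩ := hdec (sel x) (hsel x hne)
    constructor
    · rw [← hwbs]
      constructor
      · exact ENNReal.toReal_nonneg
      · have := ENNReal.toReal_nonneg (a := ((sel x : ProbabilityMeasure ℝ) : Measure ℝ) {Td x})
        linarith [hsums]
    · intro η hfib
      obtain ⟨hdecη, hsumη, hwbη⟩ := hdec η hfib
      rw [hdecη]
      congr 1
      · congr 1
        have hto : ((η : Measure ℝ) {Td x}).toReal = 1 - ρ x := by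
          linarith [hsumη, hwbη]
        rw [← hto]
        exact (ENNReal.ofReal_toReal (measure_ne_top _ _)).symm
      · congr 1
        rw [← hwbη]
        exact (ENNReal.ofReal_toReal (measure_ne_top _ _)).symm
  -- assemble
  refine ⟨Xs, hXsmeas, hXssub, hXsfull, ρ, Td, Tu, ?_, ?_, ?_⟩
  · -- ranges
    intro x hxXs
    by_cases hne : (Fib x).Nonempty
    · have hTdI : Td x ∈ Set.Icc y0 y1 := hCsIcc x (hTdCs x hne)
      have hTuI : Tu x ∈ Set.Icc y0 y1 := hCsIcc x (hTuCs x hne)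
      refine ⟨?_, hTdI, hTuI, hTdTu x hne⟩
      rcases eq_or_lt_of_le (hTdTu x hne) with he | hl
      · have : ρ x = 1 := by
          rw [hρdef]
          exact if_neg (by rintro ⟨_, hne'⟩; exact hne' he)
        rw [this]; exact ⟨zero_le_one, le_refl 1⟩
      · exact (hkey x hxXs hne hl).1
    · have h1 : Td x = y0 := if_neg hne
      have h2 : Tu x = y0 := if_neg hne
      have h3 : ρ x = 1 := by
        rw [hρdef]
        exact if_neg (by rintro ⟨hne', _⟩; exact hne hne')
      rw [h1, h2, h3]
      exact ⟨⟨zero_le_one, le_refl 1⟩, ⟨le_refl _, hy01⟩, ⟨le_refl _, hy01⟩, le_refl _⟩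
  · -- two-point structure on the support
    intro a ha hXs1
    have hfib : (a.1, a.2) ∈ msupport γ := ha
    have hne : (Fib a.1).Nonempty := ⟨a.2, hfib⟩
    rcases eq_or_lt_of_le (hTdTu a.1 hne) with he | hl
    · -- Dirac case
      have hρ1 : ρ a.1 = 1 := by
        rw [hρdef]
        exact if_neg (by rintro ⟨_, hne'⟩; exact hne' he)
      have hconcC := hCsconc a.1 a.2 hfib
      have hsub2 : Cs a.1 ⊆ {Td a.1} := by
        intro u hu
        rcases hCsub a.1 hXs1 hne hu with h | h
        · exact h
        · rw [Set.mem_singleton_iff, h, ← he]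
      have hcompl : (a.2 : Measure ℝ) ({Td a.1} : Set ℝ)ᶜ = 0 :=
        measure_mono_null (Set.compl_subset_compl.2 hsub2) hconcC
      have := eq_dirac_of_null_compl (a.2 : Measure ℝ) (Td a.1) hcompl
      rw [this, hρ1]
      simp [he]
    · exact (hkey a.1 hXs1 hne hl).2 a.2 hfib
  · -- ordering
    intro x hxXs x' hx'Xs hlt
    by_cases hne : (Fib x).Nonempty
    · by_cases hne' : (Fib x').Nonempty
      · constructor
        · intro hmem
          exact hE x x' hne hne' hlt (Td x) (hTdCs x hne) (Tu x) (hTuCs x hne)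
            (Td x') (hTdCs x' hne') hmem.1 hmem.2
        · intro hmem
          exact hE x x' hne hne' hlt (Td x) (hTdCs x hne) (Tu x) (hTuCs x hne)
            (Tu x') (hTuCs x' hne') hmem.1 hmem.2
      · have h1 : Td x' = y0 := if_neg hne'
        have h2 : Tu x' = y0 := if_neg hne'
        have h3 : y0 ≤ Td x := (hCsIcc x (hTdCs x hne)).1
        constructor
        · rw [h1]; intro hmem; exact absurd hmem.1 (not_lt.2 h3)
        · rw [h2]; intro hmem; exact absurd hmem.1 (not_lt.2 h3)
    · have h1 : Td x = y0 := if_neg hne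
      have h2 : Tu x = y0 := if_neg hne
      rw [h1, h2]
      simp
end MainProof

end
end

section
/- Characterization of positive assortative segregation as a uniform price equilibrium: Let w : X × Y × Y → ℝ be twice continuously differentiable (w(x,y,z) is the willingness-to-pay of a type-y student at a type-x school whose student body is concentrated at z). Then PAS is a uniform price equilibrium — i.e. there exist functions p : X → ℝ and q : Y → ℝ such that p(x) + q(S(x)) = w(x, S(x), S(x)) for all x ∈ X and p(x) + q(y) ≥ w(x, y, S(x)) for all (x,y) ∈ X × Y — if and only if for all (x,y) ∈ X × Y: ∫_{S(x)}^{y} ∫_{x}^{S⁻¹(ỹ)} [ w_xy(x̃, ỹ, S(x̃)) + w_yz(x̃, ỹ, S(x̃))·S'(x̃) ] dx̃ dỹ ≥ 0. -/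
open MeasureTheory Set

noncomputable section

/-- A probability measure on `ℝ`, concentrated on `[a,b]`, whose cdf has the continuous
strictly positive density `f` on `[a,b]`. -/
def HasDensityCDF (a b : ℝ) (μ : Measure ℝ) (f : ℝ → ℝ) : Prop :=
  IsProbabilityMeasure μ ∧ μ (Set.Icc a b)ᶜ = 0 ∧
  ContinuousOn f (Set.Icc a b) ∧ (∀ t ∈ Set.Icc a b, 0 < f t) ∧
  ∀ t ∈ Set.Icc a b, cdfOf μ t = ∫ s in a..t, f s

/-- **Characterization of PAS as a uniform price equilibrium** (Theorem 10, part 1):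
PAS is a uniform price equilibrium iff the double-integral condition holds for all
`(x,y) ∈ X × Y`. -/
theorem pas_is_uniform_price_equilibrium_iff
    (x0 x1 y0 y1 : ℝ) (hx : x0 < x1) (hy : y0 < y1)
    (μ ν : Measure ℝ) (f g : ℝ → ℝ)
    (hμ : HasDensityCDF x0 x1 μ f) (hν : HasDensityCDF y0 y1 ν g)
    -- the PAS matching `S = G⁻¹ ∘ F`, with derivative `S'(x) = f(x)/g(S(x))`,
    -- and its inverse `S⁻¹`
    (S Sinv S' : ℝ → ℝ)
    (hS : ∀ x ∈ Set.Icc x0 x1, S x ∈ Set.Icc y0 y1 ∧ cdfOf ν (S x) = cdfOf μ x)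
    (hScont : ContinuousOn S (Set.Icc x0 x1)) (hSmono : StrictMonoOn S (Set.Icc x0 x1))
    (hS' : ∀ x ∈ Set.Icc x0 x1, HasDerivAt S (S' x) x)
    (hS'eq : ∀ x ∈ Set.Icc x0 x1, S' x = f x / g (S x))
    (hS'cont : ContinuousOn S' (Set.Icc x0 x1))
    (hSinv : ∀ y ∈ Set.Icc y0 y1, Sinv y ∈ Set.Icc x0 x1 ∧ S (Sinv y) = y)
    -- the willingness-to-pay function `w(x,y,z)` and its derivative data
    (w wy wxy wyz : ℝ → ℝ → ℝ → ℝ)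
    (hwy : ∀ x ∈ Set.Icc x0 x1, ∀ y ∈ Set.Icc y0 y1, ∀ z ∈ Set.Icc y0 y1,
      HasDerivAt (fun t => w x t z) (wy x y z) y)
    (hwxy : ∀ x ∈ Set.Icc x0 x1, ∀ y ∈ Set.Icc y0 y1, ∀ z ∈ Set.Icc y0 y1,
      HasDerivAt (fun t => wy t y z) (wxy x y z) x)
    (hwyz : ∀ x ∈ Set.Icc x0 x1, ∀ y ∈ Set.Icc y0 y1, ∀ z ∈ Set.Icc y0 y1,
      HasDerivAt (fun t => wy x y t) (wyz x y z) z)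
    (hwxycont : ContinuousOn (fun a : ℝ × ℝ × ℝ => wxy a.1 a.2.1 a.2.2)
      (Set.Icc x0 x1 ×ˢ Set.Icc y0 y1 ×ˢ Set.Icc y0 y1))
    (hwyzcont : ContinuousOn (fun a : ℝ × ℝ × ℝ => wyz a.1 a.2.1 a.2.2)
      (Set.Icc x0 x1 ×ˢ Set.Icc y0 y1 ×ˢ Set.Icc y0 y1)) :
    -- PAS is a UPE iff the double integral is nonnegative for all (x,y)
    (∃ p q : ℝ → ℝ,
      (∀ x ∈ Set.Icc x0 x1, p x + q (S x) = w x (S x) (S x)) ∧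
      (∀ x ∈ Set.Icc x0 x1, ∀ y ∈ Set.Icc y0 y1, w x y (S x) ≤ p x + q y)) ↔
    (∀ x ∈ Set.Icc x0 x1, ∀ y ∈ Set.Icc y0 y1,
      0 ≤ ∫ t in (S x)..y,
        (∫ s in x..(Sinv t), (wxy s t (S s) + wyz s t (S s) * S' s))) := by
  clear hμ hν hS'eq
  have hx0X : x0 ∈ Icc x0 x1 := ⟨le_refl _, hx.le⟩
  have hx1X : x1 ∈ Icc x0 x1 := ⟨hx.le, le_refl _⟩
  have hy0Y : y0 ∈ Icc y0 y1 := ⟨le_refl _, hy.le⟩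
  have hy1Y : y1 ∈ Icc y0 y1 := ⟨hy.le, le_refl _⟩
  have hSX : ∀ x ∈ Icc x0 x1, S x ∈ Icc y0 y1 := fun x hxm => (hS x hxm).1
  have hsubX : ∀ {a b : ℝ}, a ∈ Icc x0 x1 → b ∈ Icc x0 x1 → uIcc a b ⊆ Icc x0 x1 := by
    intro a b ha hb
    rw [← Set.uIcc_of_le hx.le]
    exact Set.uIcc_subset_uIcc (by rwa [Set.uIcc_of_le hx.le]) (by rwa [Set.uIcc_of_le hx.le])
  have hsubY : ∀ {a b : ℝ}, a ∈ Icc y0 y1 → b ∈ Icc y0 y1 → uIcc a b ⊆ Icc y0 y1 := by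
    intro a b ha hb
    rw [← Set.uIcc_of_le hy.le]
    exact Set.uIcc_subset_uIcc (by rwa [Set.uIcc_of_le hy.le]) (by rwa [Set.uIcc_of_le hy.le])
  -- endpoints are matched
  have hSx0 : S x0 = y0 := by
    obtain ⟨hm, he⟩ := hSinv y0 hy0Y
    have h1 : y0 ≤ S x0 := (hSX x0 hx0X).1
    rcases eq_or_lt_of_le hm.1 with heq | hlt
    · rw [← heq] at he; linarith
    · have h2 := hSmono hx0X hm hlt
      rw [he] at h2; linarith
  have hSx1 : S x1 = y1 := by
    obtain ⟨hm, he⟩ := hSinv y1 hy1Y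
    have h1 : S x1 ≤ y1 := (hSX x1 hx1X).2
    rcases eq_or_lt_of_le hm.2 with heq | hlt
    · rw [heq] at he; linarith
    · have h2 := hSmono hm hx1X hlt
      rw [he] at h2; linarith
  -- the inner integrand and the inner integral
  obtain ⟨H, hHdef⟩ : ∃ H : ℝ → ℝ → ℝ, H = fun s t => wxy s t (S s) + wyz s t (S s) * S' s :=
    ⟨_, rfl⟩
  obtain ⟨A, hAdef⟩ : ∃ A : ℝ → ℝ → ℝ, A = fun a t => ∫ s in a..(Sinv t), H s t := ⟨_, rfl⟩
  -- joint continuity of H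
  have hHcont : ContinuousOn (fun p : ℝ × ℝ => H p.1 p.2) (Icc x0 x1 ×ˢ Icc y0 y1) := by
    simp only [hHdef]
    have hmap : MapsTo (fun p : ℝ × ℝ => (p.1, p.2, S p.1)) (Icc x0 x1 ×ˢ Icc y0 y1)
        (Icc x0 x1 ×ˢ Icc y0 y1 ×ˢ Icc y0 y1) := fun p hp =>
      Set.mem_prod.2 ⟨hp.1, Set.mem_prod.2 ⟨hp.2, hSX p.1 hp.1⟩⟩
    have he : ContinuousOn (fun p : ℝ × ℝ => (p.1, p.2, S p.1)) (Icc x0 x1 ×ˢ Icc y0 y1) := by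
      apply ContinuousOn.prodMk continuousOn_fst
      apply ContinuousOn.prodMk continuousOn_snd
      exact hScont.comp continuousOn_fst (fun p hp => hp.1)
    exact (hwxycont.comp he hmap).add ((hwyzcont.comp he hmap).mul
      (hS'cont.comp continuousOn_fst fun p hp => hp.1))
  have hHcont_s : ∀ t ∈ Icc y0 y1, ContinuousOn (fun s => H s t) (Icc x0 x1) := by
    intro t ht
    exact hHcont.comp ((continuous_id.prodMk continuous_const).continuousOn)
      (fun s hs => Set.mem_prod.2 ⟨hs, ht⟩)
  have hHcont_t : ∀ s ∈ Icc x0 x1, ContinuousOn (fun t => H s t) (Icc y0 y1) := by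
    intro s hs
    exact hHcont.comp ((continuous_const.prodMk continuous_id).continuousOn)
      (fun t ht => Set.mem_prod.2 ⟨hs, ht⟩)
  have hHint : ∀ t ∈ Icc y0 y1, ∀ {a b : ℝ}, a ∈ Icc x0 x1 → b ∈ Icc x0 x1 →
      IntervalIntegrable (fun s => H s t) volume a b := by
    intro t ht a b ha hb
    exact ((hHcont_s t ht).mono (hsubX ha hb)).intervalIntegrable
  -- uniform bound on H
  obtain ⟨M, hM0, hMb⟩ : ∃ M, 0 ≤ M ∧ ∀ s ∈ Icc x0 x1, ∀ t ∈ Icc y0 y1, |H s t| ≤ M := by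
    obtain ⟨C, hC⟩ := (isCompact_Icc.prod isCompact_Icc).exists_bound_of_continuousOn hHcont
    refine ⟨max C 0, le_max_right _ _, fun s hs t ht => ?_⟩
    have := hC (s, t) (Set.mem_prod.2 ⟨hs, ht⟩)
    rw [Real.norm_eq_abs] at this
    exact le_trans this (le_max_left _ _)
  -- continuity of Sinv within Y
  have hSinvCont : ∀ τ₀ ∈ Icc y0 y1, ContinuousWithinAt Sinv (Icc y0 y1) τ₀ := by
    intro τ₀ hτ₀
    rw [ContinuousWithinAt, Metric.tendsto_nhdsWithin_nhds]
    intro ε hε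
    obtain ⟨hcX, hScτ⟩ := hSinv τ₀ hτ₀
    set c := Sinv τ₀ with hc
    set a := max x0 (c - ε / 2) with ha
    set b := min x1 (c + ε / 2) with hb
    have haX : a ∈ Icc x0 x1 := ⟨le_max_left _ _, max_le hx.le (by linarith [hcX.2])⟩
    have hbX : b ∈ Icc x0 x1 := ⟨le_min hx.le (by linarith [hcX.1]), min_le_left _ _⟩
    have hac : a ≤ c := max_le hcX.1 (by linarith)
    have hcb : c ≤ b := le_min hcX.2 (by linarith)
    have key : ∀ τ ∈ Icc y0 y1, S a ≤ τ → τ ≤ S b → dist (Sinv τ) c < ε := by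
      intro τ hτ h1 h2
      obtain ⟨hmX, hme⟩ := hSinv τ hτ
      have hge : a ≤ Sinv τ := by
        by_contra hlt; push_neg at hlt
        have h3 := hSmono hmX haX hlt
        rw [hme] at h3; linarith
      have hle : Sinv τ ≤ b := by
        by_contra hlt; push_neg at hlt
        have h3 := hSmono hbX hmX hlt
        rw [hme] at h3; linarith
      rw [Real.dist_eq, abs_sub_lt_iff]
      constructor
      · have : b ≤ c + ε / 2 := min_le_right _ _
        linarith
      · have : c - ε / 2 ≤ a := le_max_right _ _
        linarith
    have hδ1 : ∃ δ1 > 0, ∀ τ ∈ Icc y0 y1, |τ - τ₀| < δ1 → S a ≤ τ := by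
      rcases lt_or_ge (S a) τ₀ with hlt | hge
      · exact ⟨τ₀ - S a, by linarith, fun τ _ hd => by
          rw [abs_sub_lt_iff] at hd; linarith [hd.2]⟩
      · have hac2 : a = c := by
          rcases eq_or_lt_of_le hac with h | h
          · exact h
          · have h3 := hSmono haX hcX h
            rw [hScτ] at h3; linarith
        have hcx0 : c ≤ x0 := by
          by_contra hc0; push_neg at hc0
          have : a < c := by
            rw [ha]; exact max_lt hc0 (by linarith)
          linarith
        have hax0 : a = x0 := by
          have : x0 ≤ a := haX.1
          rw [hac2]; linarith
        exact ⟨1, one_pos, fun τ hτ _ => by rw [hax0, hSx0]; exact hτ.1⟩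
    have hδ2 : ∃ δ2 > 0, ∀ τ ∈ Icc y0 y1, |τ - τ₀| < δ2 → τ ≤ S b := by
      rcases lt_or_ge τ₀ (S b) with hlt | hge
      · exact ⟨S b - τ₀, by linarith, fun τ _ hd => by
          rw [abs_sub_lt_iff] at hd; linarith [hd.1]⟩
      · have hbc2 : b = c := by
          rcases eq_or_lt_of_le hcb with h | h
          · exact h.symm
          · have h3 := hSmono hcX hbX h
            rw [hScτ] at h3; linarith
        have hcx1 : x1 ≤ c := by
          by_contra hc0; push_neg at hc0
          have : c < b := by
            rw [hb]; exact lt_min hc0 (by linarith)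
          linarith
        have hbx1 : b = x1 := by
          have : b ≤ x1 := hbX.2
          rw [hbc2]; linarith
        exact ⟨1, one_pos, fun τ hτ _ => by rw [hbx1, hSx1]; exact hτ.2⟩
    obtain ⟨δ1, hδ1pos, hδ1p⟩ := hδ1
    obtain ⟨δ2, hδ2pos, hδ2p⟩ := hδ2
    refine ⟨min δ1 δ2, lt_min hδ1pos hδ2pos, ?_⟩
    intro τ hτ hd
    rw [Real.dist_eq] at hd
    exact key τ hτ (hδ1p τ hτ (lt_of_lt_of_le hd (min_le_left _ _)))
      (hδ2p τ hτ (lt_of_lt_of_le hd (min_le_right _ _)))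
  -- continuity of z ↦ wyz s t z
  have hwyzY : ∀ s ∈ Icc x0 x1, ∀ t ∈ Icc y0 y1, ContinuousOn (fun c => wyz s t c) (Icc y0 y1) := by
    intro s hs t ht
    exact hwyzcont.comp ((continuous_const.prodMk
      (continuous_const.prodMk continuous_id)).continuousOn)
      (fun c hc => Set.mem_prod.2 ⟨hs, Set.mem_prod.2 ⟨ht, hc⟩⟩)
  -- splitting wy along the diagonal
  have hsplit : ∀ t ∈ Icc y0 y1, ∀ z₀ ∈ Icc y0 y1, ∀ s ∈ Icc x0 x1,
      wy s t (S s) - wy s t z₀ = ∫ c in z₀..(S s), wyz s t c := by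
    intro t ht z₀ hz₀ s hs
    have h1 : ∀ c ∈ uIcc z₀ (S s), HasDerivAt (fun u => wy s t u) (wyz s t c) c :=
      fun c hc => hwyz s hs t ht c (hsubY hz₀ (hSX s hs) hc)
    have h2 : IntervalIntegrable (fun c => wyz s t c) volume z₀ (S s) :=
      ((hwyzY s hs t ht).mono (hsubY hz₀ (hSX s hs))).intervalIntegrable
    rw [intervalIntegral.integral_eq_sub_of_hasDerivAt h1 h2]
  -- the key derivative computation: s ↦ wy s t (S s) has derivative H s t within X
  have keyderiv : ∀ t ∈ Icc y0 y1, ∀ s₀ ∈ Icc x0 x1,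
      HasDerivWithinAt (fun s => wy s t (S s)) (H s₀ t) (Icc x0 x1) s₀ := by
    intro t ht s₀ hs₀
    have hz₀ : S s₀ ∈ Icc y0 y1 := hSX s₀ hs₀
    have hg₂ : HasDerivAt (fun s => wy s t (S s₀)) (wxy s₀ t (S s₀)) s₀ :=
      hwxy s₀ hs₀ t ht (S s₀) hz₀
    have hS'₀ := hS' s₀ hs₀
    have hslopeS : Filter.Tendsto (slope S s₀) (nhdsWithin s₀ (Icc x0 x1 \ {s₀}))
        (nhds (S' s₀)) :=
      (hasDerivAt_iff_tendsto_slope.mp hS'₀).mono_left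
        (nhdsWithin_mono s₀ (fun u hu => hu.2))
    have hg₁ : HasDerivWithinAt (fun s => ∫ c in (S s₀)..(S s), wyz s t c)
        (wyz s₀ t (S s₀) * S' s₀) (Icc x0 x1) s₀ := by
      rw [hasDerivWithinAt_iff_tendsto_slope]
      have hg₁0 : (∫ c in (S s₀)..(S s₀), wyz s₀ t c) = 0 := intervalIntegral.integral_same
      have hE : Filter.Tendsto
          (fun s => slope (fun s => ∫ c in (S s₀)..(S s), wyz s t c) s₀ s
            - wyz s₀ t (S s₀) * slope S s₀ s)
          (nhdsWithin s₀ (Icc x0 x1 \ {s₀})) (nhds 0) := by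
        rw [Metric.tendsto_nhdsWithin_nhds]
        intro ε hε
        set B := |S' s₀| + 1 with hB
        have hBpos : (0:ℝ) < B := by positivity
        set ε' := ε / (2 * B) with hε'
        have hε'pos : 0 < ε' := by positivity
        have hcw : ContinuousWithinAt (fun a : ℝ × ℝ × ℝ => wyz a.1 a.2.1 a.2.2)
            (Icc x0 x1 ×ˢ Icc y0 y1 ×ˢ Icc y0 y1) (s₀, t, S s₀) :=
          hwyzcont _ (Set.mem_prod.2 ⟨hs₀, Set.mem_prod.2 ⟨ht, hz₀⟩⟩)
        rw [ContinuousWithinAt, Metric.tendsto_nhdsWithin_nhds] at hcw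
        obtain ⟨δ₁, hδ₁pos, hδ₁⟩ := hcw ε' hε'pos
        obtain ⟨δ₂, hδ₂pos, hδ₂⟩ := Metric.continuousAt_iff.mp hS'₀.continuousAt (δ₁ / 2)
          (by positivity)
        obtain ⟨δ₃, hδ₃pos, hδ₃⟩ := Metric.tendsto_nhdsWithin_nhds.mp hslopeS 1 one_pos
        refine ⟨min (min δ₂ δ₃) (δ₁ / 2), by positivity, ?_⟩
        rintro s ⟨hsX, hsne⟩ hdist
        have hne : s ≠ s₀ := hsne
        have hsub0 : s - s₀ ≠ 0 := sub_ne_zero.2 hne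
        have hd2 : dist s s₀ < δ₂ :=
          lt_of_lt_of_le hdist (le_trans (min_le_left _ _) (min_le_left _ _))
        have hd3 : dist s s₀ < δ₃ :=
          lt_of_lt_of_le hdist (le_trans (min_le_left _ _) (min_le_right _ _))
        have hd1 : dist s s₀ < δ₁ / 2 := lt_of_lt_of_le hdist (min_le_right _ _)
        have hSdist : |S s - S s₀| < δ₁ / 2 := by
          have h5 := hδ₂ hd2
          rwa [Real.dist_eq] at h5
        have hint1 : IntervalIntegrable (fun c => wyz s t c) volume (S s₀) (S s) :=
          ((hwyzY s hsX t ht).mono (hsubY hz₀ (hSX s hsX))).intervalIntegrable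
        have hintsub : (∫ c in (S s₀)..(S s), wyz s t c) - wyz s₀ t (S s₀) * (S s - S s₀)
            = ∫ c in (S s₀)..(S s), (wyz s t c - wyz s₀ t (S s₀)) := by
          rw [intervalIntegral.integral_sub hint1 intervalIntegrable_const,
            intervalIntegral.integral_const, smul_eq_mul]
          ring
        have hbound : |∫ c in (S s₀)..(S s), (wyz s t c - wyz s₀ t (S s₀))|
            ≤ ε' * |S s - S s₀| := by
          have h6 : ∀ c ∈ Set.uIoc (S s₀) (S s), ‖wyz s t c - wyz s₀ t (S s₀)‖ ≤ ε' := by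
            intro c hc
            have hcu : c ∈ uIcc (S s₀) (S s) := Set.uIoc_subset_uIcc hc
            have hcY : c ∈ Icc y0 y1 := hsubY hz₀ (hSX s hsX) hcu
            have hcd : |c - S s₀| ≤ |S s - S s₀| := abs_sub_left_of_mem_uIcc hcu
            have h7 := hδ₁ (Set.mem_prod.2 ⟨hsX, Set.mem_prod.2 ⟨ht, hcY⟩⟩)
              (show dist (s, t, c) (s₀, t, S s₀) < δ₁ by
                rw [Prod.dist_eq, Prod.dist_eq]
                apply max_lt (lt_of_lt_of_le hd1 (by linarith))
                apply max_lt
                · simpa [dist_self] using hδ₁pos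
                · rw [Real.dist_eq]
                  exact lt_of_le_of_lt hcd (lt_of_lt_of_le hSdist (by linarith)))
            rw [Real.dist_eq] at h7
            rw [Real.norm_eq_abs]
            exact h7.le
          have := intervalIntegral.norm_integral_le_of_norm_le_const h6
          rwa [Real.norm_eq_abs] at this
        have hslopeBnd : |slope S s₀ s| ≤ B := by
          have h8 := hδ₃ ⟨hsX, hsne⟩ hd3
          rw [Real.dist_eq] at h8
          have h9 : |slope S s₀ s| - |S' s₀| ≤ |slope S s₀ s - S' s₀| := by
            exact abs_sub_abs_le_abs_sub _ _
          rw [hB]; linarith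
        rw [Real.dist_eq, sub_zero]
        have hEeq : slope (fun s => ∫ c in (S s₀)..(S s), wyz s t c) s₀ s
            - wyz s₀ t (S s₀) * slope S s₀ s
            = ((∫ c in (S s₀)..(S s), wyz s t c) - wyz s₀ t (S s₀) * (S s - S s₀)) / (s - s₀) := by
          rw [slope_def_field, slope_def_field, hg₁0]
          field_simp
          ring
        rw [hEeq, hintsub, abs_div]
        have h10 : |∫ c in (S s₀)..(S s), (wyz s t c - wyz s₀ t (S s₀))| / |s - s₀|
            ≤ ε' * (|S s - S s₀| / |s - s₀|) := by
          rw [← mul_div_assoc]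
          exact div_le_div_of_nonneg_right hbound (abs_nonneg _)
        have h11 : |S s - S s₀| / |s - s₀| = |slope S s₀ s| := by
          rw [slope_def_field, abs_div]
        calc |∫ c in (S s₀)..(S s), (wyz s t c - wyz s₀ t (S s₀))| / |s - s₀|
            ≤ ε' * |slope S s₀ s| := by rw [← h11]; exact h10
          _ ≤ ε' * B := by
              apply mul_le_mul_of_nonneg_left hslopeBnd hε'pos.le
          _ = ε / 2 := by rw [hε']; field_simp
          _ < ε := by linarith
      have h2 : Filter.Tendsto
          (fun s => wyz s₀ t (S s₀) * slope S s₀ s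
            + (slope (fun s => ∫ c in (S s₀)..(S s), wyz s t c) s₀ s
              - wyz s₀ t (S s₀) * slope S s₀ s))
          (nhdsWithin s₀ (Icc x0 x1 \ {s₀})) (nhds (wyz s₀ t (S s₀) * S' s₀ + 0)) :=
        (hslopeS.const_mul _).add hE
      rw [add_zero] at h2
      exact h2.congr (fun s => by ring)
    have hsum := hg₁.add hg₂.hasDerivWithinAt
    have hfinal : HasDerivWithinAt (fun s => wy s t (S s))
        (wyz s₀ t (S s₀) * S' s₀ + wxy s₀ t (S s₀)) (Icc x0 x1) s₀ := by
      apply hsum.congr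
      · intro s hs
        simp only [Pi.add_apply]
        linarith [hsplit t ht (S s₀) hz₀ s hs]
      · simp only [Pi.add_apply]
        linarith [hsplit t ht (S s₀) hz₀ s₀ hs₀]
    have hEq : H s₀ t = wyz s₀ t (S s₀) * S' s₀ + wxy s₀ t (S s₀) := by
      simp only [hHdef]; ring
    rw [hEq]
    exact hfinal
  -- F1 : fundamental theorem of calculus for s ↦ wy s t (S s)
  have F1 : ∀ t ∈ Icc y0 y1, ∀ a ∈ Icc x0 x1, ∀ b ∈ Icc x0 x1,
      (∫ s in a..b, H s t) = wy b t (S b) - wy a t (S a) := by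
    intro t ht
    have hmain : ∀ a ∈ Icc x0 x1, ∀ b ∈ Icc x0 x1, a ≤ b →
        (∫ s in a..b, H s t) = wy b t (S b) - wy a t (S a) := by
      intro a ha b hb hab
      apply intervalIntegral.integral_eq_sub_of_hasDeriv_right_of_le hab
      · intro s hs
        have hsX : s ∈ Icc x0 x1 := ⟨le_trans ha.1 hs.1, le_trans hs.2 hb.2⟩
        exact ((keyderiv t ht s hsX).continuousWithinAt).mono (Icc_subset_Icc ha.1 hb.2)
      · intro s hs
        have hsX : s ∈ Icc x0 x1 := ⟨le_trans ha.1 hs.1.le, le_trans hs.2.le hb.2⟩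
        have hmem : Icc x0 x1 ∈ nhdsWithin s (Ioi s) := by
          have h1 : Ioc s x1 ∈ nhdsWithin s (Ioi s) := by
            rw [← Set.Ioi_inter_Iic]
            exact Filter.inter_mem self_mem_nhdsWithin
              (mem_nhdsWithin_of_mem_nhds (Iic_mem_nhds (lt_of_lt_of_le hs.2 hb.2)))
          exact Filter.mem_of_superset h1 (fun u hu => ⟨le_trans hsX.1 hu.1.le, hu.2⟩)
        exact (keyderiv t ht s hsX).mono_of_mem_nhdsWithin hmem
      · exact hHint t ht ha hb
    intro a ha b hb
    rcases le_total a b with hab | hab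
    · exact hmain a ha b hb hab
    · have h1 := hmain b hb a ha hab
      rw [intervalIntegral.integral_symm]
      rw [h1]; ring
  -- difference of A's at different base points
  have hAdiff : ∀ τ ∈ Icc y0 y1, ∀ a ∈ Icc x0 x1, ∀ b ∈ Icc x0 x1,
      A a τ - A b τ = ∫ s in a..b, H s τ := by
    intro τ hτ a ha b hb
    have h1 := intervalIntegral.integral_add_adjacent_intervals
      (hHint τ hτ ha hb) (hHint τ hτ hb (hSinv τ hτ).1)
    simp only [hAdef]
    linarith
  -- Lipschitz property of A in the first variable
  have hALip : ∀ τ ∈ Icc y0 y1, ∀ a ∈ Icc x0 x1, ∀ b ∈ Icc x0 x1,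
      |A a τ - A b τ| ≤ M * |a - b| := by
    intro τ hτ a ha b hb
    rw [hAdiff τ hτ a ha b hb]
    have h6 : ∀ s ∈ Set.uIoc a b, ‖H s τ‖ ≤ M := by
      intro s hs
      rw [Real.norm_eq_abs]
      exact hMb s (hsubX ha hb (Set.uIoc_subset_uIcc hs)) τ hτ
    have := intervalIntegral.norm_integral_le_of_norm_le_const h6
    rwa [Real.norm_eq_abs, abs_sub_comm b a] at this
  -- continuity of A a within Y
  have hAcont : ∀ a ∈ Icc x0 x1, ∀ τ₀ ∈ Icc y0 y1, ContinuousWithinAt (A a) (Icc y0 y1) τ₀ := by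
    intro a ha τ₀ hτ₀
    obtain ⟨hcX, hce⟩ := hSinv τ₀ hτ₀
    have hΙX : Set.uIoc a (Sinv τ₀) ⊆ Icc x0 x1 := fun s hs => hsubX ha hcX (Set.uIoc_subset_uIcc hs)
    have hpart1 : ContinuousWithinAt (fun τ => ∫ s in a..(Sinv τ₀), H s τ) (Icc y0 y1) τ₀ := by
      apply intervalIntegral.continuousWithinAt_of_dominated_interval (bound := fun _ => M)
      · filter_upwards [self_mem_nhdsWithin] with τ hτ
        exact (((hHcont_s τ hτ)).mono hΙX).aestronglyMeasurable measurableSet_uIoc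
      · filter_upwards [self_mem_nhdsWithin] with τ hτ
        apply Filter.Eventually.of_forall
        intro s hs
        rw [Real.norm_eq_abs]
        exact hMb s (hΙX hs) τ hτ
      · exact intervalIntegrable_const
      · apply Filter.Eventually.of_forall
        intro s hs
        exact (hHcont_t s (hΙX hs)) τ₀ hτ₀
    have hpart2 : Filter.Tendsto (fun τ => ∫ s in (Sinv τ₀)..(Sinv τ), H s τ)
        (nhdsWithin τ₀ (Icc y0 y1)) (nhds 0) := by
      apply squeeze_zero_norm' (a := fun τ => M * |Sinv τ - Sinv τ₀|)
      · filter_upwards [self_mem_nhdsWithin] with τ hτ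
        have h6 : ∀ s ∈ Set.uIoc (Sinv τ₀) (Sinv τ), ‖H s τ‖ ≤ M := by
          intro s hs
          rw [Real.norm_eq_abs]
          exact hMb s (hsubX hcX (hSinv τ hτ).1 (Set.uIoc_subset_uIcc hs)) τ hτ
        have := intervalIntegral.norm_integral_le_of_norm_le_const h6
        exact this
      · have h1 : Filter.Tendsto (fun τ => Sinv τ) (nhdsWithin τ₀ (Icc y0 y1))
            (nhds (Sinv τ₀)) := hSinvCont τ₀ hτ₀
        have h2 := ((h1.sub_const (Sinv τ₀)).abs).const_mul M
        simpa using h2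
    have hdecomp : ∀ τ ∈ Icc y0 y1,
        A a τ = (∫ s in a..(Sinv τ₀), H s τ) + ∫ s in (Sinv τ₀)..(Sinv τ), H s τ := by
      intro τ hτ
      simp only [hAdef]
      rw [intervalIntegral.integral_add_adjacent_intervals (hHint τ hτ ha hcX)
        (hHint τ hτ hcX (hSinv τ hτ).1)]
    have hlim : Filter.Tendsto (A a) (nhdsWithin τ₀ (Icc y0 y1))
        (nhds ((∫ s in a..(Sinv τ₀), H s τ₀) + 0)) := by
      apply Filter.Tendsto.congr' _ (Filter.Tendsto.add hpart1 hpart2)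
      filter_upwards [self_mem_nhdsWithin] with τ hτ
      exact (hdecomp τ hτ).symm
    have hval : A a τ₀ = (∫ s in a..(Sinv τ₀), H s τ₀) + 0 := by
      rw [hdecomp τ₀ hτ₀, intervalIntegral.integral_same]
    rw [ContinuousWithinAt, hval]
    exact hlim
  have hAint : ∀ a ∈ Icc x0 x1, ∀ {u v : ℝ}, u ∈ Icc y0 y1 → v ∈ Icc y0 y1 →
      IntervalIntegrable (A a) volume u v := by
    intro a ha u v hu hv
    apply ContinuousOn.intervalIntegrable
    intro τ hτ
    exact (hAcont a ha τ (hsubY hu hv hτ)).mono (hsubY hu hv)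
  have hSx0Y : S x0 ∈ Icc y0 y1 := hSX x0 hx0X
  -- the candidate price function
  obtain ⟨qt, hqtdef⟩ : ∃ qt : ℝ → ℝ, qt = fun τ => w x0 τ (S x0) + ∫ t in (S x0)..τ, A x0 t :=
    ⟨_, rfl⟩
  -- the key identity (★)
  have star : ∀ x ∈ Icc x0 x1, ∀ y ∈ Icc y0 y1,
      qt y - qt (S x) - (w x y (S x) - w x (S x) (S x)) = ∫ t in (S x)..y, A x t := by
    intro x hxm y hym
    have hSxY : S x ∈ Icc y0 y1 := hSX x hxm
    have hΔ : ∀ τ ∈ uIcc (S x) y, HasDerivAt (fun τ => w x0 τ (S x0) - w x τ (S x))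
        (A x τ - A x0 τ) τ := by
      intro τ hτ
      have hτY : τ ∈ Icc y0 y1 := hsubY hSxY hym hτ
      have h1 := (hwy x0 hx0X τ hτY (S x0) hSx0Y).sub (hwy x hxm τ hτY (S x) hSxY)
      have h2 : A x τ - A x0 τ = wy x0 τ (S x0) - wy x τ (S x) := by
        have h3 := hAdiff τ hτY x hxm x0 hx0X
        have h4 := F1 τ hτY x hxm x0 hx0X
        linarith
      rw [h2]
      exact h1
    have hIx : IntervalIntegrable (A x) volume (S x) y := hAint x hxm hSxY hym
    have hIx0 : IntervalIntegrable (A x0) volume (S x) y := hAint x0 hx0X hSxY hym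
    have hDint : IntervalIntegrable (fun τ => A x τ - A x0 τ) volume (S x) y := hIx.sub hIx0
    have hFTC := intervalIntegral.integral_eq_sub_of_hasDerivAt hΔ hDint
    rw [intervalIntegral.integral_sub hIx hIx0] at hFTC
    have hFTC' : (∫ t in (S x)..y, A x t) - ∫ t in (S x)..y, A x0 t
        = (w x0 y (S x0) - w x y (S x)) - (w x0 (S x) (S x0) - w x (S x) (S x)) := hFTC
    have hadj := intervalIntegral.integral_add_adjacent_intervals
      (hAint x0 hx0X hSx0Y hSxY) (hAint x0 hx0X hSxY hym)
    simp only [hqtdef]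
    linarith
  -- fold the goal's double integral into A
  have hfold : ∀ x y : ℝ, (∫ t in (S x)..y,
      (∫ s in x..(Sinv t), (wxy s t (S s) + wyz s t (S s) * S' s))) = ∫ t in (S x)..y, A x t := by
    intro x y
    simp only [hAdef, hHdef]
  constructor
  · rintro ⟨p, q, heq, hineq⟩ x hxm y hym
    rw [hfold x y, ← star x hxm y hym]
    -- q - qt is constant on Y
    have hmder : ∀ τ₀ ∈ Icc y0 y1, HasDerivWithinAt (fun τ => q τ - qt τ) 0 (Icc y0 y1) τ₀ := by
      intro τ₀ hτ₀
      obtain ⟨hcX, hce⟩ := hSinv τ₀ hτ₀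
      have hA0 : A (Sinv τ₀) τ₀ = 0 := by
        simp only [hAdef]; exact intervalIntegral.integral_same
      rw [hasDerivWithinAt_iff_tendsto_slope, Metric.tendsto_nhdsWithin_nhds]
      intro ε hε
      have hc1 := hAcont (Sinv τ₀) hcX τ₀ hτ₀
      rw [ContinuousWithinAt, Metric.tendsto_nhdsWithin_nhds] at hc1
      obtain ⟨δ₁, hδ₁pos, hδ₁⟩ := hc1 (ε / 4) (by positivity)
      have hc2 := hSinvCont τ₀ hτ₀
      rw [ContinuousWithinAt, Metric.tendsto_nhdsWithin_nhds] at hc2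
      obtain ⟨δ₂, hδ₂pos, hδ₂⟩ := hc2 (ε / (4 * (M + 1))) (by positivity)
      refine ⟨min δ₁ δ₂, lt_min hδ₁pos hδ₂pos, ?_⟩
      rintro u ⟨huY, hune⟩ hdist
      have hune' : u ≠ τ₀ := hune
      have hd1 : dist u τ₀ < δ₁ := lt_of_lt_of_le hdist (min_le_left _ _)
      have hd2 : dist u τ₀ < δ₂ := lt_of_lt_of_le hdist (min_le_right _ _)
      have huX : Sinv u ∈ Icc x0 x1 := (hSinv u huY).1
      have hSinvu : S (Sinv u) = u := (hSinv u huY).2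
      -- bound on A (Sinv τ₀) on points near τ₀
      have hub1 : ∀ σ, σ ∈ Icc y0 y1 → |σ - τ₀| ≤ dist u τ₀ → |A (Sinv τ₀) σ| ≤ ε / 4 := by
        intro σ hσY hσd
        have h7 := hδ₁ hσY (lt_of_le_of_lt hσd hd1)
        rw [Real.dist_eq, hA0, sub_zero] at h7
        exact h7.le
      have hub2 : ∀ σ, σ ∈ Icc y0 y1 → |σ - τ₀| ≤ dist u τ₀ → |A (Sinv u) σ| ≤ ε / 2 := by
        intro σ hσY hσd
        have h8 : |A (Sinv u) σ - A (Sinv τ₀) σ| ≤ M * |Sinv u - Sinv τ₀| :=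
          hALip σ hσY (Sinv u) huX (Sinv τ₀) hcX
        have h9 : |Sinv u - Sinv τ₀| < ε / (4 * (M + 1)) := by
          have := hδ₂ huY hd2
          rwa [Real.dist_eq] at this
        have h10 : M * |Sinv u - Sinv τ₀| ≤ ε / 4 := by
          have h11 : M * |Sinv u - Sinv τ₀| ≤ M * (ε / (4 * (M + 1))) :=
            mul_le_mul_of_nonneg_left h9.le hM0
          have h12 : M * (ε / (4 * (M + 1))) ≤ ε / 4 := by
            rw [mul_div_assoc']
            rw [div_le_div_iff₀ (by positivity) (by norm_num)]
            nlinarith [hε.le, hM0]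
          linarith
        have h13 := hub1 σ hσY hσd
        calc |A (Sinv u) σ| ≤ |A (Sinv τ₀) σ| + |A (Sinv u) σ - A (Sinv τ₀) σ| := by
              have := abs_sub_abs_le_abs_sub (A (Sinv u) σ) (A (Sinv τ₀) σ)
              linarith [abs_sub_comm (A (Sinv u) σ) (A (Sinv τ₀) σ)]
          _ ≤ ε / 4 + ε / 4 := by linarith
          _ = ε / 2 := by ring
      -- integral bounds
      have hI₁ : |∫ σ in τ₀..u, A (Sinv τ₀) σ| ≤ (ε / 4) * |u - τ₀| := by
        have h6 : ∀ σ ∈ Set.uIoc τ₀ u, ‖A (Sinv τ₀) σ‖ ≤ ε / 4 := by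
          intro σ hσ
          have hσu : σ ∈ uIcc τ₀ u := Set.uIoc_subset_uIcc hσ
          have hσY : σ ∈ Icc y0 y1 := hsubY hτ₀ huY hσu
          rw [Real.norm_eq_abs]
          apply hub1 σ hσY
          rw [Real.dist_eq]
          exact abs_sub_left_of_mem_uIcc hσu
        have := intervalIntegral.norm_integral_le_of_norm_le_const h6
        rwa [Real.norm_eq_abs] at this
      have hI₂ : |∫ σ in u..τ₀, A (Sinv u) σ| ≤ (ε / 2) * |u - τ₀| := by
        have h6 : ∀ σ ∈ Set.uIoc u τ₀, ‖A (Sinv u) σ‖ ≤ ε / 2 := by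
          intro σ hσ
          have hσu : σ ∈ uIcc u τ₀ := Set.uIoc_subset_uIcc hσ
          have hσY : σ ∈ Icc y0 y1 := hsubY huY hτ₀ hσu
          rw [Real.norm_eq_abs]
          apply hub2 σ hσY
          rw [Real.dist_eq, abs_sub_comm σ τ₀, abs_sub_comm u τ₀]
          exact abs_sub_right_of_mem_uIcc hσu
        have := intervalIntegral.norm_integral_le_of_norm_le_const h6
        rw [Real.norm_eq_abs] at this
        rwa [abs_sub_comm τ₀ u] at this
      -- the sandwich
      have hs1 : (q u - qt u) - (q τ₀ - qt τ₀) ≥ -(∫ σ in τ₀..u, A (Sinv τ₀) σ) := by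
        have hstar := star (Sinv τ₀) hcX u huY
        rw [hce] at hstar
        have hiq := hineq (Sinv τ₀) hcX u huY
        rw [hce] at hiq
        have heqq := heq (Sinv τ₀) hcX
        rw [hce] at heqq
        linarith
      have hs2 : (q τ₀ - qt τ₀) - (q u - qt u) ≥ -(∫ σ in u..τ₀, A (Sinv u) σ) := by
        have hstar := star (Sinv u) huX τ₀ hτ₀
        rw [hSinvu] at hstar
        have hiq := hineq (Sinv u) huX τ₀ hτ₀
        rw [hSinvu] at hiq
        have heqq := heq (Sinv u) huX
        rw [hSinvu] at heqq
        linarith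
      -- conclude
      rw [Real.dist_eq, sub_zero, slope_def_field, abs_div]
      have hne : u - τ₀ ≠ 0 := sub_ne_zero.2 hune'
      have habs : (0:ℝ) < |u - τ₀| := abs_pos.2 hne
      have hDlow : -((ε / 2) * |u - τ₀|) ≤ (q u - qt u) - (q τ₀ - qt τ₀) := by
        have h14 : -(∫ σ in τ₀..u, A (Sinv τ₀) σ) ≥ -((ε / 4) * |u - τ₀|) := by
          have := le_abs_self (∫ σ in τ₀..u, A (Sinv τ₀) σ)
          linarith [hI₁]
        have h15 : (ε / 4) * |u - τ₀| ≤ (ε / 2) * |u - τ₀| := by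
          apply mul_le_mul_of_nonneg_right (by linarith) (abs_nonneg _)
        linarith [hs1]
      have hDhigh : (q u - qt u) - (q τ₀ - qt τ₀) ≤ (ε / 2) * |u - τ₀| := by
        have h14 : (q u - qt u) - (q τ₀ - qt τ₀) ≤ ∫ σ in u..τ₀, A (Sinv u) σ := by
          linarith [hs2]
        have h15 : (∫ σ in u..τ₀, A (Sinv u) σ) ≤ (ε / 2) * |u - τ₀| := by
          have := le_abs_self (∫ σ in u..τ₀, A (Sinv u) σ)
          linarith [hI₂]
        linarith
      have hD : |(q u - qt u) - (q τ₀ - qt τ₀)| ≤ (ε / 2) * |u - τ₀| :=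
        abs_le.mpr ⟨hDlow, hDhigh⟩
      calc |(q u - qt u) - (q τ₀ - qt τ₀)| / |u - τ₀| ≤ ((ε / 2) * |u - τ₀|) / |u - τ₀| :=
            div_le_div_of_nonneg_right hD habs.le
        _ = ε / 2 := by field_simp
        _ < ε := by linarith
    have hmconst : ∀ τ ∈ Icc y0 y1, q τ - qt τ = q y0 - qt y0 := by
      have hco : ContinuousOn (fun τ => q τ - qt τ) (Icc y0 y1) :=
        fun τ hτ => (hmder τ hτ).continuousWithinAt
      have hder : ∀ σ ∈ Ico y0 y1, HasDerivWithinAt (fun τ => q τ - qt τ) 0 (Ici σ) σ := by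
        intro σ hσ
        apply (hmder σ ⟨hσ.1, hσ.2.le⟩).mono_of_mem_nhdsWithin
        have h1 : Icc σ y1 ∈ nhdsWithin σ (Ici σ) := by
          rw [← Set.Ici_inter_Iic]
          exact Filter.inter_mem self_mem_nhdsWithin
            (mem_nhdsWithin_of_mem_nhds (Iic_mem_nhds hσ.2))
        exact Filter.mem_of_superset h1 (fun v hv => ⟨le_trans hσ.1 hv.1, hv.2⟩)
      exact constant_of_has_deriv_right_zero hco hder
    have hSxY : S x ∈ Icc y0 y1 := hSX x hxm
    have h1 := hmconst y hym
    have h2 := hmconst (S x) hSxY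
    have h3 := hineq x hxm y hym
    have h4 := heq x hxm
    linarith
  · intro hcond
    refine ⟨fun x => w x (S x) (S x) - qt (S x), qt, fun x _ => by ring, ?_⟩
    intro x hxm y hym
    have h := star x hxm y hym
    have h2 := hcond x hxm y hym
    rw [hfold x y] at h2
    dsimp only
    linarith

end
end
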